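/- Let Ω be a properly convex domain and γ ∈ Aut(Ω) a contracting element for (Ω, PS^Ω) where PS^Ω is the path system of all projective segments. Suppose for some x₀ ∈ Ω and sequences of positive integers n_k, m_k the limits p = lim γ^{n_k} x₀ ∈ E_γ⁺ and q = lim γ^{−m_k} x₀ ∈ E_γ⁻ exist. Then the open segment (p,q) is contained in Ω. -/

import Mathlib

open Set Filter

abbrev Vd (d : ℕ) := Fin (d + 1) → ℝ

/-- A properly convex domain `Ω ⊆ P(ℝ^{d+1})`, described by its open convex cone of lifts:
an open convex cone `C` whose closure contains no line through the origin. Points of the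
closure of `Ω` are represented by nonzero vectors of the closure of `C`, and two vectors
represent the same point iff they lie on the same ray. -/
def IsProperConvexCone {d : ℕ} (C : Set (Vd d)) : Prop :=
  IsOpen C ∧ Convex ℝ C ∧ C.Nonempty ∧
    (∀ x ∈ C, ∀ t : ℝ, 0 < t → t • x ∈ C) ∧
    (closure C ∩ (-(closure C)) ⊆ {0})

/-- Lifts of the projective segment `[x,y]` between the points represented by `x` and `y`. -/
def segCone {d : ℕ} (x y : Vd d) : Set (Vd d) :=
  {v | ∃ s t : ℝ, 0 ≤ s ∧ 0 ≤ t ∧ 0 < s + t ∧ v = s • x + t • y}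

/-- Lifts of the open projective segment `(x,y)`. -/
def openSegCone {d : ℕ} (x y : Vd d) : Set (Vd d) :=
  {v | ∃ s t : ℝ, 0 < s ∧ 0 < t ∧ v = s • x + t • y}

/-- The Hilbert metric on `Ω`, computed on cone lifts:
`d([x],[y]) = log ( M(x/y) · M(y/x) )` where `M(x/y) = inf { t > 0 | t • y - x ∈ closure C }`.
This agrees with the cross-ratio definition of the Hilbert metric and is invariant under
rescaling of the lifts. -/
noncomputable def coneDist {d : ℕ} (C : Set (Vd d)) (x y : Vd d) : ℝ :=
  Real.log (sInf {t : ℝ | 0 < t ∧ t • y - x ∈ closure C} *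
    sInf {t : ℝ | 0 < t ∧ t • x - y ∈ closure C})

/-- `A ∈ GL(d+1, ℝ)` induces an automorphism of `Ω` iff its linear action preserves the cone. -/
def PreservesCone {d : ℕ} (C : Set (Vd d)) (A : Matrix (Fin (d + 1)) (Fin (d + 1)) ℝ) : Prop :=
  A.mulVec '' C = C

/-- The translation length `τ_Ω(g) = inf_{x ∈ Ω} d_Ω(x, g x)`. -/
noncomputable def translationLength {d : ℕ} (C : Set (Vd d))
    (A : Matrix (Fin (d + 1)) (Fin (d + 1)) ℝ) : ℝ :=
  sInf ((fun x => coneDist C x (A.mulVec x)) '' C)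

/-- `λ_max`: the largest modulus of a (complex) eigenvalue of `A`. -/
noncomputable def specMax {d : ℕ} (A : Matrix (Fin (d + 1)) (Fin (d + 1)) ℝ) : ℝ :=
  sSup ((fun z : ℂ => ‖z‖) '' spectrum ℂ (A.map Complex.ofReal))

/-- `λ_min`: the smallest modulus of a (complex) eigenvalue of `A`. -/
noncomputable def specMin {d : ℕ} (A : Matrix (Fin (d + 1)) (Fin (d + 1)) ℝ) : ℝ :=
  sInf ((fun z : ℂ => ‖z‖) '' spectrum ℂ (A.map Complex.ofReal))

/-- Three pairwise distinct boundary points `x, y, z` form a half triangle if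
`[x,z] ∪ [y,z] ⊆ ∂Ω` and `(x,y) ⊆ Ω`. -/
def IsHalfTriangle {d : ℕ} (C : Set (Vd d)) (x y z : Vd d) : Prop :=
  segCone x z ⊆ frontier C ∧ segCone y z ⊆ frontier C ∧ openSegCone x y ⊆ C

/-- The bi-infinite projective line `(x,y)` is contained in a half triangle in `∂Ω`. -/
def InHalfTriangle {d : ℕ} (C : Set (Vd d)) (x y : Vd d) : Prop :=
  ∃ z ∈ frontier C, z ≠ 0 ∧ ¬ SameRay ℝ z x ∧ ¬ SameRay ℝ z y ∧ IsHalfTriangle C x y z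

/-- `(x,y)` is an axis of the automorphism induced by `A`: an invariant bi-infinite
projective line that intersects `Ω`. -/
def IsAxis {d : ℕ} (C : Set (Vd d)) (A : Matrix (Fin (d + 1)) (Fin (d + 1)) ℝ)
    (x y : Vd d) : Prop :=
  x ∈ frontier C ∧ y ∈ frontier C ∧ x ≠ 0 ∧ y ≠ 0 ∧ ¬ SameRay ℝ x y ∧
    openSegCone x y ⊆ C ∧ A.mulVec '' segCone x y = segCone x y

/-- A rank-one isometry: positive translation length, existence of an axis, and no axis
contained in a half triangle in `∂Ω`. -/
def IsRankOne {d : ℕ} (C : Set (Vd d)) (A : Matrix (Fin (d + 1)) (Fin (d + 1)) ℝ) : Prop :=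
  0 < translationLength C A ∧ (∃ x y, IsAxis C A x y) ∧
    ∀ x y, IsAxis C A x y → ¬ InHalfTriangle C x y

/-- The sum of the eigenspaces of (the complexification of) `A` for eigenvalues of
maximal modulus. -/
noncomputable def maxModEigenSubmodule {d : ℕ}
    (A : Matrix (Fin (d + 1)) (Fin (d + 1)) ℝ) : Submodule ℂ (Fin (d + 1) → ℂ) :=
  ⨆ μ ∈ {μ : ℂ | ‖μ‖ = specMax A},
    Module.End.eigenspace (Matrix.toLin' (A.map Complex.ofReal)) μ

/-- The set of real vectors lying (after complexification) in the sum of eigenspaces of `A`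
for eigenvalues of maximal modulus; its projectivization is `P(E_γ̃)`. -/
def Eset {d : ℕ} (A : Matrix (Fin (d + 1)) (Fin (d + 1)) ℝ) : Set (Vd d) :=
  {v | (fun i => (v i : ℂ)) ∈ maxModEigenSubmodule A}

/-- The matrix of `g^n` for `g` in the projective general linear group, `n : ℤ`. -/
def zpowMat {d : ℕ} (g : Matrix.GeneralLinearGroup (Fin (d + 1)) ℝ) (n : ℤ) :
    Matrix (Fin (d + 1)) (Fin (d + 1)) ℝ :=
  ((g ^ n : Matrix.GeneralLinearGroup (Fin (d + 1)) ℝ) : Matrix (Fin (d + 1)) (Fin (d + 1)) ℝ)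

/-- A subset `S` of `Ω` is `PS^Ω`-contracting (in the sense of Sisto, with the path system
of all projective segments): there are a constant `Cc` and a projection `π : Ω → S` which
moves points of `S` at most `Cc`, and such that whenever `d_Ω(π x, π y) ≥ Cc`, the
projective segment `[x,y]` passes within `Cc` of both `π x` and `π y`. -/
def IsPSContractingSet {d : ℕ} (C S : Set (Vd d)) : Prop :=
  ∃ Cc : ℝ, ∃ π : Vd d → Vd d, (∀ x ∈ C, π x ∈ S) ∧
    (∀ x ∈ S, coneDist C x (π x) ≤ Cc) ∧
    ∀ x ∈ C, ∀ y ∈ C, Cc ≤ coneDist C (π x) (π y) →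
      (∃ p ∈ segCone x y, coneDist C p (π x) ≤ Cc) ∧
      (∃ p ∈ segCone x y, coneDist C p (π y) ≤ Cc)

/-- `g` is a contracting element for `(Ω, PS^Ω)` in the sense of Sisto: `g` has infinite
order (projectively), some orbit `⟨g⟩x₀` is a quasigeodesic embedding of `ℤ`, and there
is a `⟨g⟩`-invariant `PS^Ω`-contracting subset containing `x₀` with cobounded `⟨g⟩`
action. -/
def IsContractingElement {d : ℕ} (C : Set (Vd d))
    (g : Matrix.GeneralLinearGroup (Fin (d + 1)) ℝ) : Prop :=
  ∃ x₀ ∈ C,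
    (∀ n : ℤ, n ≠ 0 → ∀ c : ℝ, zpowMat g n ≠ c • (1 : Matrix (Fin (d + 1)) (Fin (d + 1)) ℝ)) ∧
    (∃ K Cq : ℝ, 1 ≤ K ∧ 0 ≤ Cq ∧ ∀ m n : ℤ,
      |(m : ℝ) - (n : ℝ)| / K - Cq ≤
          coneDist C ((zpowMat g m).mulVec x₀) ((zpowMat g n).mulVec x₀) ∧
        coneDist C ((zpowMat g m).mulVec x₀) ((zpowMat g n).mulVec x₀) ≤
          K * |(m : ℝ) - (n : ℝ)| + Cq) ∧
    ∃ S : Set (Vd d), S ⊆ C ∧ x₀ ∈ S ∧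
      (∀ n : ℤ, ∀ v ∈ S, (zpowMat g n).mulVec v ∈ S) ∧
      IsPSContractingSet C S ∧
      ∃ R : ℝ, ∀ v ∈ S, ∃ n : ℤ, coneDist C v ((zpowMat g n).mulVec x₀) ≤ R

namespace ConeProof
open Pointwise

variable {d : ℕ} {C : Set (Vd d)}

/-- `M(x/y) = inf { t > 0 | t • y - x ∈ closure C }`. -/
noncomputable def Mf (C : Set (Vd d)) (x y : Vd d) : ℝ :=
  sInf {t : ℝ | 0 < t ∧ t • y - x ∈ closure C}

def Mset (C : Set (Vd d)) (x y : Vd d) : Set ℝ :=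
  {t : ℝ | 0 < t ∧ t • y - x ∈ closure C}

lemma Mf_def (C : Set (Vd d)) (x y : Vd d) : Mf C x y = sInf (Mset C x y) := rfl

lemma coneDist_eq (C : Set (Vd d)) (x y : Vd d) :
    coneDist C x y = Real.log (Mf C x y * Mf C y x) := rfl

lemma coneDist_symm (C : Set (Vd d)) (x y : Vd d) :
    coneDist C x y = coneDist C y x := by
  rw [coneDist_eq, coneDist_eq, mul_comm]

lemma Mset_bddBelow (C : Set (Vd d)) (x y : Vd d) : BddBelow (Mset C x y) :=
  ⟨0, fun t ht => ht.1.le⟩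

section Basic

variable (hC : IsProperConvexCone C)
include hC

lemma Copen : IsOpen C := hC.1
lemma Cconv : Convex ℝ C := hC.2.1
lemma Cne : C.Nonempty := hC.2.2.1
lemma Ccone : ∀ x ∈ C, ∀ t : ℝ, 0 < t → t • x ∈ C := hC.2.2.2.1

lemma Cproper : ∀ x, x ∈ closure C → -x ∈ closure C → x = 0 := by
  intro x hx hnx
  have hmem : x ∈ closure C ∩ (-(closure C)) := ⟨hx, by simpa using hnx⟩
  simpa using hC.2.2.2.2 hmem

lemma zero_not_mem : (0 : Vd d) ∉ C := by
  intro h0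
  have huniv : ∀ v : Vd d, v ∈ C := by
    intro v
    rcases Metric.isOpen_iff.1 hC.1 0 h0 with ⟨r, hr, hball⟩
    by_cases hv : v = 0
    · rwa [hv]
    · have hnorm : 0 < ‖v‖ := norm_pos_iff.2 hv
      set ε := r / (2 * ‖v‖) with hε
      have hεpos : 0 < ε := by positivity
      have hmem : ε • v ∈ C := by
        apply hball
        have : ‖ε • v‖ = r / 2 := by
          rw [norm_smul, Real.norm_eq_abs, abs_of_pos hεpos, hε]
          field_simp
        simp only [Metric.mem_ball, dist_eq_norm, sub_zero]
        rw [this]; linarith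
      have := hC.2.2.2.1 _ hmem (ε⁻¹) (by positivity)
      rwa [smul_smul, inv_mul_cancel₀ hεpos.ne', one_smul] at this
  set w : Vd d := fun _ => (1 : ℝ) with hw
  have hne : w ≠ 0 := by
    intro h
    have := congrFun h 0
    norm_num [hw] at this
  exact hne (Cproper hC _ (subset_closure (huniv w)) (subset_closure (huniv (-w))))

lemma zero_mem_clC : (0 : Vd d) ∈ closure C := by
  rcases hC.2.2.1 with ⟨x₀, hx₀⟩
  have hseq : Filter.Tendsto (fun n : ℕ => (1 / ((n : ℝ) + 1)) • x₀) atTop (nhds 0) := by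
    have := tendsto_one_div_add_atTop_nhds_zero_nat (𝕜 := ℝ)
    simpa using this.smul_const x₀
  exact mem_closure_of_tendsto hseq (Filter.Eventually.of_forall fun n =>
    hC.2.2.2.1 _ hx₀ _ (by positivity))

lemma clC_smul {x : Vd d} (hx : x ∈ closure C) {t : ℝ} (ht : 0 ≤ t) :
    t • x ∈ closure C := by
  rcases eq_or_lt_of_le ht with h | h
  · rw [← h, zero_smul]; exact zero_mem_clC hC
  · exact map_mem_closure (continuous_const_smul t) hx fun y hy => hC.2.2.2.1 _ hy _ h

lemma clC_add {x y : Vd d} (hx : x ∈ closure C) (hy : y ∈ closure C) :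
    x + y ∈ closure C := by
  have hconv : Convex ℝ (closure C) := hC.2.1.closure
  have hmid : (1/2 : ℝ) • x + (1/2 : ℝ) • y ∈ closure C :=
    hconv hx hy (by norm_num) (by norm_num) (by norm_num)
  have := clC_smul hC hmid (by norm_num : (0:ℝ) ≤ 2)
  rwa [smul_add, smul_smul, smul_smul, (by norm_num : (2:ℝ) * (1/2) = 1), one_smul,
    one_smul] at this

lemma C_add_clC {x y : Vd d} (hx : x ∈ C) (hy : y ∈ closure C) : x + y ∈ C := by
  have hmid : (1/2 : ℝ) • x + (1/2 : ℝ) • y ∈ interior C :=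
    hC.2.1.combo_interior_closure_mem_interior (by rwa [hC.1.interior_eq]) hy
      (by norm_num) (by norm_num) (by norm_num)
  rw [hC.1.interior_eq] at hmid
  have := hC.2.2.2.1 _ hmid 2 (by norm_num)
  rwa [smul_add, smul_smul, smul_smul, (by norm_num : (2:ℝ) * (1/2) = 1), one_smul,
    one_smul] at this

lemma Mset_nonempty {y : Vd d} (hy : y ∈ C) (x : Vd d) : (Mset C x y).Nonempty := by
  rcases Metric.isOpen_iff.1 hC.1 y hy with ⟨r, hr, hball⟩
  set t : ℝ := 1 + ‖x‖ / r with htdef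
  have ht : 0 < t := by positivity
  refine ⟨t, ht, ?_⟩
  have hmem : y - t⁻¹ • x ∈ C := by
    apply hball
    refine Metric.mem_ball.2 ?_
    rw [dist_eq_norm]
    have hnn : ‖y - t⁻¹ • x - y‖ = ‖x‖ / t := by
      rw [sub_sub_cancel_left, norm_neg, norm_smul, Real.norm_eq_abs,
        abs_of_pos (by positivity), inv_mul_eq_div]
    rw [hnn, div_lt_iff₀ ht]
    have hrt : r * t = r + ‖x‖ := by
      rw [htdef, mul_add, mul_one, mul_div_cancel₀ _ hr.ne']
    linarith
  have := hC.2.2.2.1 _ hmem t ht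
  rw [smul_sub, smul_smul, mul_inv_cancel₀ ht.ne', one_smul] at this
  exact subset_closure this

lemma Mf_mem {x y : Vd d} (hx : x ∈ closure C) (hx0 : x ≠ 0) (hy : y ∈ C) :
    0 < Mf C x y ∧ Mf C x y ∈ Mset C x y := by
  obtain ⟨u, _, hu1, hu2⟩ := exists_seq_tendsto_sInf (Mset_nonempty hC hy x)
    (Mset_bddBelow C x y)
  have hMdef : Mf C x y = sInf (Mset C x y) := rfl
  have hlim : Filter.Tendsto (fun n => (u n) • y - x) atTop
      (nhds ((Mf C x y) • y - x)) := by
    rw [hMdef]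
    exact (hu1.smul_const y).sub_const x
  have hcl : (Mf C x y) • y - x ∈ closure C :=
    isClosed_closure.mem_of_tendsto hlim
      (Filter.Eventually.of_forall fun n => (hu2 n).2)
  have hnonneg : 0 ≤ Mf C x y :=
    le_csInf (Mset_nonempty hC hy x) fun t ht => ht.1.le
  rcases eq_or_lt_of_le hnonneg with h | h
  · exfalso
    rw [← h, zero_smul, zero_sub] at hcl
    exact hx0 (Cproper hC x hx hcl)
  · exact ⟨h, h, hcl⟩

omit hC in
lemma Mf_le {x y : Vd d} {t : ℝ} (h : t ∈ Mset C x y) : Mf C x y ≤ t :=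
  csInf_le (Mset_bddBelow C x y) h

lemma one_le_Mf_mul {x y : Vd d} (hx : x ∈ C) (hy : y ∈ C) :
    1 ≤ Mf C x y * Mf C y x := by
  have hx0 : x ≠ 0 := fun h => zero_not_mem hC (h ▸ hx)
  have hy0 : y ≠ 0 := fun h => zero_not_mem hC (h ▸ hy)
  obtain ⟨hm1pos, _, hm1⟩ := Mf_mem hC (subset_closure hx) hx0 hy
  obtain ⟨hm2pos, _, hm2⟩ := Mf_mem hC (subset_closure hy) hy0 hx
  set m1 := Mf C x y
  set m2 := Mf C y x
  by_contra hlt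
  push_neg at hlt
  have hcomb : (m1 * m2 - 1) • y ∈ closure C := by
    have := clC_add hC (clC_smul hC hm1 hm2pos.le) hm2
    have heq : m2 • (m1 • y - x) + (m2 • x - y) = (m1 * m2 - 1) • y := by
      module
    rwa [heq] at this
  have hpos : (0:ℝ) < 1 - m1 * m2 := by linarith
  have hneg : -((1 - m1 * m2) • y) ∈ closure C := by
    have : (m1 * m2 - 1) • y = -((1 - m1 * m2) • y) := by
      module
    rwa [← this]
  have hposmem : (1 - m1 * m2) • y ∈ closure C :=
    clC_smul hC (subset_closure hy) hpos.le
  have := Cproper hC _ hposmem hneg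
  rw [smul_eq_zero] at this
  rcases this with h | h
  · linarith
  · exact hy0 h

lemma Mf_pos {x y : Vd d} (hx : x ∈ C) (hy : y ∈ C) : 0 < Mf C x y :=
  (Mf_mem hC (subset_closure hx) (fun h => zero_not_mem hC (h ▸ hx)) hy).1

lemma coneDist_nonneg {x y : Vd d} (hx : x ∈ C) (hy : y ∈ C) :
    0 ≤ coneDist C x y := by
  rw [coneDist_eq]
  exact Real.log_nonneg (one_le_Mf_mul hC hx hy)

lemma Mf_triangle {x y z : Vd d} (hx : x ∈ C) (hy : y ∈ C) (hz : z ∈ C) :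
    Mf C x z ≤ Mf C x y * Mf C y z := by
  obtain ⟨hm1pos, _, hm1⟩ := Mf_mem hC (subset_closure hx)
    (fun h => zero_not_mem hC (h ▸ hx)) hy
  obtain ⟨hm2pos, _, hm2⟩ := Mf_mem hC (subset_closure hy)
    (fun h => zero_not_mem hC (h ▸ hy)) hz
  apply Mf_le
  refine ⟨mul_pos hm1pos hm2pos, ?_⟩
  have := clC_add hC (clC_smul hC hm2 hm1pos.le) hm1
  have heq : Mf C x y • (Mf C y z • z - y) + (Mf C x y • y - x)
      = (Mf C x y * Mf C y z) • z - x := by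
    module
  rwa [heq] at this

lemma coneDist_triangle {x y z : Vd d} (hx : x ∈ C) (hy : y ∈ C) (hz : z ∈ C) :
    coneDist C x z ≤ coneDist C x y + coneDist C y z := by
  rw [coneDist_eq, coneDist_eq, coneDist_eq]
  have h1 := Mf_triangle hC hx hy hz
  have h2 := Mf_triangle hC hz hy hx
  have p1 := Mf_pos hC hx hz
  have p2 := Mf_pos hC hz hx
  have p3 := Mf_pos hC hx hy
  have p4 := Mf_pos hC hy hx
  have p5 := Mf_pos hC hy hz
  have p6 := Mf_pos hC hz hy
  rw [← Real.log_mul (by positivity) (by positivity)]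
  apply Real.log_le_log (by positivity)
  nlinarith [mul_le_mul h1 h2 p2.le (by positivity : (0:ℝ) ≤ Mf C x y * Mf C y z)]

end Basic

section Scaling

variable (hC : IsProperConvexCone C)
include hC

lemma clC_smul_iff {x : Vd d} {c : ℝ} (hc : 0 < c) :
    c • x ∈ closure C ↔ x ∈ closure C := by
  constructor
  · intro h
    have := clC_smul hC h (inv_pos.2 hc).le
    rwa [smul_smul, inv_mul_cancel₀ hc.ne', one_smul] at this
  · intro h
    exact clC_smul hC h hc.le

lemma Mset_smul_left {x y : Vd d} {c : ℝ} (hc : 0 < c) :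
    Mset C (c • x) y = c • (Mset C x y) := by
  ext t
  constructor
  · rintro ⟨ht, hmem⟩
    refine ⟨t / c, ⟨div_pos ht hc, ?_⟩, by simp only [smul_eq_mul]; field_simp⟩
    rw [← clC_smul_iff hC hc]
    have heq : c • ((t / c) • y - x) = t • y - c • x := by
      rw [smul_sub, smul_smul, mul_div_cancel₀ _ hc.ne']
    rwa [heq]
  · rintro ⟨s, ⟨hs, hmem⟩, rfl⟩
    have heq : (c • s) • y - c • x = c • (s • y - x) := by
      rw [smul_sub, smul_smul, smul_eq_mul]
    refine ⟨by positivity, ?_⟩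
    rw [heq, clC_smul_iff hC hc]
    exact hmem

lemma Mf_smul_left {x y : Vd d} {c : ℝ} (hc : 0 < c) :
    Mf C (c • x) y = c * Mf C x y := by
  have h1 : Mf C (c • x) y = sInf (Mset C (c • x) y) := rfl
  have h2 : Mf C x y = sInf (Mset C x y) := rfl
  rw [h1, h2, Mset_smul_left hC hc, Real.sInf_smul_of_nonneg hc.le, smul_eq_mul]

lemma Mset_smul_right {x y : Vd d} {c : ℝ} (hc : 0 < c) :
    Mset C x (c • y) = c⁻¹ • (Mset C x y) := by
  ext t
  constructor
  · rintro ⟨ht, hmem⟩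
    refine ⟨c * t, ⟨by positivity, ?_⟩, by simp only [smul_eq_mul]; field_simp⟩
    have heq : t • c • y - x = (c * t) • y - x := by
      rw [smul_smul, mul_comm]
    rwa [heq] at hmem
  · rintro ⟨s, ⟨hs, hmem⟩, rfl⟩
    refine ⟨by positivity, ?_⟩
    have hsc : (c⁻¹ • s) * c = s := by rw [smul_eq_mul]; field_simp
    have heq : (c⁻¹ • s) • (c • y) - x = s • y - x := by
      rw [smul_smul, hsc]
    rwa [heq]

lemma Mf_smul_right {x y : Vd d} {c : ℝ} (hc : 0 < c) :
    Mf C x (c • y) = c⁻¹ * Mf C x y := by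
  have h1 : Mf C x (c • y) = sInf (Mset C x (c • y)) := rfl
  have h2 : Mf C x y = sInf (Mset C x y) := rfl
  rw [h1, h2, Mset_smul_right hC hc, Real.sInf_smul_of_nonneg (by positivity), smul_eq_mul]

lemma coneDist_smul {x y : Vd d} {c c' : ℝ} (hc : 0 < c) (hc' : 0 < c') :
    coneDist C (c • x) (c' • y) = coneDist C x y := by
  rw [coneDist_eq, coneDist_eq, Mf_smul_left hC hc, Mf_smul_right hC hc',
    Mf_smul_left hC hc', Mf_smul_right hC hc]
  congr 1
  field_simp

lemma coneDist_smul_left {x y : Vd d} {c : ℝ} (hc : 0 < c) :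
    coneDist C (c • x) y = coneDist C x y := by
  have := coneDist_smul hC (x := x) (y := y) hc one_pos
  rwa [one_smul] at this

lemma coneDist_smul_right {x y : Vd d} {c : ℝ} (hc : 0 < c) :
    coneDist C x (c • y) = coneDist C x y := by
  rw [coneDist_symm, coneDist_smul_left hC hc, coneDist_symm]

end Scaling

section Linear

variable {A B : Matrix (Fin (d + 1)) (Fin (d + 1)) ℝ}
  (hAB : ∀ v, A.mulVec (B.mulVec v) = v) (hBA : ∀ v, B.mulVec (A.mulVec v) = v)
  (hA : A.mulVec '' C = C)

lemma mulVec_continuous (M : Matrix (Fin (d + 1)) (Fin (d + 1)) ℝ) :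
    Continuous fun v : Vd d => M.mulVec v := by
  have : (fun v : Vd d => M.mulVec v) = (M.mulVecLin : Vd d →ₗ[ℝ] Vd d) := rfl
  rw [this]
  exact LinearMap.continuous_of_finiteDimensional _

include hAB hBA hA

lemma mulVec_inv_image : B.mulVec '' C = C := by
  have h1 : B.mulVec '' (A.mulVec '' C) = C := by
    rw [← Set.image_comp]
    have : (B.mulVec ∘ A.mulVec) = id := funext hBA
    rw [this, Set.image_id]
  rwa [hA] at h1

lemma mulVec_clC_mem_iff {v : Vd d} :
    A.mulVec v ∈ closure C ↔ v ∈ closure C := by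
  have himA : A.mulVec '' closure C ⊆ closure C := by
    have := (mulVec_continuous A).continuousOn (s := closure C)
    calc A.mulVec '' closure C ⊆ closure (A.mulVec '' C) :=
        image_closure_subset_closure_image (mulVec_continuous A)
      _ = closure C := by rw [hA]
  have himB : B.mulVec '' closure C ⊆ closure C := by
    calc B.mulVec '' closure C ⊆ closure (B.mulVec '' C) :=
        image_closure_subset_closure_image (mulVec_continuous B)
      _ = closure C := by rw [mulVec_inv_image hAB hBA hA]
  constructor
  · intro h
    have : B.mulVec (A.mulVec v) ∈ closure C := himB ⟨_, h, rfl⟩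
    rwa [hBA] at this
  · intro h
    exact himA ⟨_, h, rfl⟩

lemma Mf_map {x y : Vd d} :
    Mf C (A.mulVec x) (A.mulVec y) = Mf C x y := by
  have hset : Mset C (A.mulVec x) (A.mulVec y) = Mset C x y := by
    ext t
    have heq : t • A.mulVec y - A.mulVec x = A.mulVec (t • y - x) := by
      rw [Matrix.mulVec_sub, Matrix.mulVec_smul]
    constructor
    · rintro ⟨ht, hmem⟩
      rw [heq, mulVec_clC_mem_iff hAB hBA hA] at hmem
      exact ⟨ht, hmem⟩
    · rintro ⟨ht, hmem⟩
      refine ⟨ht, ?_⟩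
      rw [heq, mulVec_clC_mem_iff hAB hBA hA]
      exact hmem
  rw [Mf_def, Mf_def, hset]

lemma coneDist_map {x y : Vd d} :
    coneDist C (A.mulVec x) (A.mulVec y) = coneDist C x y := by
  rw [coneDist_eq, coneDist_eq, Mf_map hAB hBA hA, Mf_map hAB hBA hA]

end Linear

section Zpow

variable (g : Matrix.GeneralLinearGroup (Fin (d + 1)) ℝ)

lemma zpowMat_mulVec_add (m n : ℤ) (v : Vd d) :
    (zpowMat g m).mulVec ((zpowMat g n).mulVec v) = (zpowMat g (m + n)).mulVec v := by
  rw [Matrix.mulVec_mulVec]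
  congr 1
  unfold zpowMat
  rw [← Units.val_mul, ← zpow_add]

lemma zpowMat_zero_mulVec (v : Vd d) : (zpowMat g 0).mulVec v = v := by
  unfold zpowMat
  rw [zpow_zero, Units.val_one, Matrix.one_mulVec]

lemma zpowMat_cancel (n : ℤ) (v : Vd d) :
    (zpowMat g (-n)).mulVec ((zpowMat g n).mulVec v) = v := by
  rw [zpowMat_mulVec_add, neg_add_cancel, zpowMat_zero_mulVec]

lemma zpowMat_cancel' (n : ℤ) (v : Vd d) :
    (zpowMat g n).mulVec ((zpowMat g (-n)).mulVec v) = v := by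
  rw [zpowMat_mulVec_add, add_neg_cancel, zpowMat_zero_mulVec]

variable {C : Set (Vd d)}
  (hpres : PreservesCone C (g : Matrix (Fin (d + 1)) (Fin (d + 1)) ℝ))

include hpres

lemma zpowMat_preserves : ∀ n : ℤ, (zpowMat g n).mulVec '' C = C := by
  have hone : zpowMat g 1 = (g : Matrix (Fin (d + 1)) (Fin (d + 1)) ℝ) := by
    unfold zpowMat; rw [zpow_one]
  have base1 : (zpowMat g 1).mulVec '' C = C := by rw [hone]; exact hpres
  have baseneg : (zpowMat g (-1)).mulVec '' C = C := by
    have h1 : (zpowMat g (-1)).mulVec '' ((zpowMat g 1).mulVec '' C) = C := by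
      rw [← Set.image_comp]
      have : ((zpowMat g (-1)).mulVec ∘ (zpowMat g 1).mulVec) = id :=
        funext fun v => zpowMat_cancel g 1 v
      rw [this, Set.image_id]
    rwa [base1] at h1
  intro n
  induction n using Int.induction_on with
  | zero => rw [funext (zpowMat_zero_mulVec g), Set.image_id']
  | succ k ih =>
      have hfun : ((zpowMat g ((k : ℤ) + 1)) : Matrix (Fin (d+1)) (Fin (d+1)) ℝ).mulVec
          = (zpowMat g (k : ℤ)).mulVec ∘ (zpowMat g 1).mulVec := by
        funext v
        rw [Function.comp_apply, zpowMat_mulVec_add]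
      rw [hfun, Set.image_comp, base1, ih]
  | pred k ih =>
      have hexp : (-(k:ℤ) - 1) = (-(k:ℤ)) + (-1) := by ring
      have hfun : ((zpowMat g (-(k : ℤ) - 1)) : Matrix (Fin (d+1)) (Fin (d+1)) ℝ).mulVec
          = (zpowMat g (-(k : ℤ))).mulVec ∘ (zpowMat g (-1)).mulVec := by
        funext v
        rw [Function.comp_apply, zpowMat_mulVec_add, ← hexp]
      rw [hfun, Set.image_comp, baseneg, ih]

lemma coneDist_zpow (n : ℤ) (x y : Vd d) :
    coneDist C ((zpowMat g n).mulVec x) ((zpowMat g n).mulVec y) = coneDist C x y :=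
  coneDist_map (zpowMat_cancel' g n) (zpowMat_cancel g n) (zpowMat_preserves g hpres n)

lemma zpow_mem_C_iff (n : ℤ) {v : Vd d} :
    (zpowMat g n).mulVec v ∈ C ↔ v ∈ C := by
  constructor
  · intro h
    have := zpowMat_preserves g hpres (-n)
    have hm : (zpowMat g (-n)).mulVec ((zpowMat g n).mulVec v) ∈ C := by
      rw [← this]; exact ⟨_, h, rfl⟩
    rwa [zpowMat_cancel] at hm
  · intro h
    rw [← zpowMat_preserves g hpres n]
    exact ⟨_, h, rfl⟩

end Zpow

/-- The point `(1-α) a + α b`. -/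
def wpt (a b : Vd d) (α : ℝ) : Vd d := (1 - α) • a + α • b

lemma wpt_zero (a b : Vd d) : wpt a b 0 = a := by
  unfold wpt; module

lemma wpt_one (a b : Vd d) : wpt a b 1 = b := by
  unfold wpt; module

lemma wpt_swap (a b : Vd d) (α : ℝ) : wpt a b α = wpt b a (1 - α) := by
  unfold wpt; module

lemma smul_wpt (a b : Vd d) (c α : ℝ) :
    c • wpt a b α = (c * (1 - α)) • a + (c * α) • b := by
  unfold wpt; module

section Seg

variable (hC : IsProperConvexCone C) {a b : Vd d} (ha : a ∈ C) (hb : b ∈ C)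
include hC ha hb

lemma wpt_mem_C {α : ℝ} (hα : α ∈ Icc (0:ℝ) 1) : wpt a b α ∈ C :=
  hC.2.1 ha hb (by linarith [hα.2]) hα.1 (by ring)

omit hC ha hb in
lemma smul_wpt_mem_segCone {c α : ℝ} (hc : 0 < c) (hα : α ∈ Icc (0:ℝ) 1) :
    c • wpt a b α ∈ segCone a b := by
  refine ⟨c * (1 - α), c * α, by nlinarith [hα.1, hα.2], by nlinarith [hα.1], by nlinarith, ?_⟩
  unfold wpt
  module

omit hC ha hb in
lemma segCone_ray {v : Vd d} (hv : v ∈ segCone a b) :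
    ∃ c : ℝ, 0 < c ∧ ∃ α : ℝ, α ∈ Icc (0:ℝ) 1 ∧ v = c • wpt a b α := by
  obtain ⟨s, t, hs, ht, hst, rfl⟩ := hv
  refine ⟨s + t, hst, t / (s + t), ⟨by positivity, by
    rw [div_le_one hst]; linarith⟩, ?_⟩
  rw [smul_wpt]
  have h1 : (s + t) * (t / (s + t)) = t := by field_simp
  have h2 : (s + t) * (1 - t / (s + t)) = s := by field_simp; ring
  rw [h1, h2]

lemma segCone_subset_C : segCone a b ⊆ C := by
  intro v hv
  obtain ⟨c, hc, α, hα, rfl⟩ := segCone_ray hv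
  exact hC.2.2.2.1 _ (wpt_mem_C hC ha hb hα) _ hc

omit hC ha hb in
lemma seg_between_ray {u u' : ℝ} {v : Vd d}
    (hv : v ∈ segCone (wpt a b u) (wpt a b u')) :
    ∃ c : ℝ, 0 < c ∧ ∃ α : ℝ, α ∈ Icc (min u u') (max u u') ∧ v = c • wpt a b α := by
  obtain ⟨s, t, hs, ht, hst, rfl⟩ := hv
  refine ⟨s + t, hst, (s * u + t * u') / (s + t), ⟨?_, ?_⟩, ?_⟩
  · rw [le_div_iff₀ hst]
    have h1 : min u u' ≤ u := min_le_left _ _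
    have h2 : min u u' ≤ u' := min_le_right _ _
    nlinarith
  · rw [div_le_iff₀ hst]
    have h1 : u ≤ max u u' := le_max_left _ _
    have h2 : u' ≤ max u u' := le_max_right _ _
    nlinarith
  · have h1 : (s + t) * ((s * u + t * u') / (s + t)) = s * u + t * u' := by
      field_simp
    have h2 : (s + t) * (1 - (s * u + t * u') / (s + t)) = s * (1 - u) + t * (1 - u') := by
      field_simp
      ring
    rw [smul_wpt, smul_wpt, smul_wpt, h1, h2]
    module

omit ha hb in
lemma coneDist_le_log {x y : Vd d} (hx : x ∈ C) (hy : y ∈ C) {u v : ℝ}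
    (h1 : Mf C x y ≤ u) (h2 : Mf C y x ≤ v) :
    coneDist C x y ≤ Real.log (u * v) := by
  rw [coneDist_eq]
  have p1 := Mf_pos hC hx hy
  have p2 := Mf_pos hC hy hx
  apply Real.log_le_log (by positivity)
  exact mul_le_mul h1 h2 p2.le (le_trans p1.le h1)

omit ha hb in
lemma coneDist_self {x : Vd d} (hx : x ∈ C) : coneDist C x x = 0 := by
  have h1 : Mf C x x ≤ 1 := Mf_le ⟨one_pos, by
    rw [one_smul, sub_self]; exact zero_mem_clC hC⟩
  have hge := one_le_Mf_mul hC hx hx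
  have hpos := Mf_pos hC hx hx
  have : Mf C x x = 1 := le_antisymm h1 (by nlinarith)
  rw [coneDist_eq, this, one_mul, Real.log_one]

/-- Distance bound between interior points of the segment. -/
lemma dist_wpt_le {α β : ℝ} (hα : 0 < α) (hαβ : α ≤ β) (hβ : β < 1) :
    coneDist C (wpt a b α) (wpt a b β) ≤
      Real.log (((1 - α) / (1 - β)) * (β / α)) := by
  have hβ0 : 0 < β := lt_of_lt_of_le hα hαβ
  have hα1 : α < 1 := lt_of_le_of_lt hαβ hβ
  have h1β : (0:ℝ) < 1 - β := by linarith
  have h1α : (0:ℝ) < 1 - α := by linarith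
  have hwα : wpt a b α ∈ C := wpt_mem_C hC ha hb ⟨hα.le, hα1.le⟩
  have hwβ : wpt a b β ∈ C := wpt_mem_C hC ha hb ⟨hβ0.le, hβ.le⟩
  have hM1 : Mf C (wpt a b α) (wpt a b β) ≤ (1 - α) / (1 - β) := by
    apply Mf_le
    refine ⟨div_pos h1α h1β, ?_⟩
    have e1 : (1 - α) / (1 - β) * (1 - β) = 1 - α := by field_simp
    have e2 : (1 - α) / (1 - β) * β = α + (β - α) / (1 - β) := by
      field_simp
      ring
    have heq : ((1 - α) / (1 - β)) • wpt a b β - wpt a b α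
        = ((β - α) / (1 - β)) • b := by
      rw [smul_wpt, e1, e2]
      unfold wpt
      module
    rw [heq]
    exact clC_smul hC (subset_closure hb) (div_nonneg (by linarith) h1β.le)
  have hM2 : Mf C (wpt a b β) (wpt a b α) ≤ β / α := by
    apply Mf_le
    refine ⟨div_pos hβ0 hα, ?_⟩
    have e1 : β / α * α = β := by field_simp
    have e2 : β / α * (1 - α) = (1 - β) + (β - α) / α := by
      field_simp
      ring
    have heq : (β / α) • wpt a b α - wpt a b β = ((β - α) / α) • a := by
      rw [smul_wpt, e2, e1]
      unfold wpt
      module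
    rw [heq]
    exact clC_smul hC (subset_closure ha) (div_nonneg (by linarith) hα.le)
  exact coneDist_le_log hC hwα hwβ hM1 hM2

lemma dist_endpoint_left {α : ℝ} (hα : 0 ≤ α) (hα2 : α ≤ 1/2) :
    coneDist C a (wpt a b α) ≤ 2 * α * Mf C b a := by
  have hb0 : b ≠ 0 := fun h => zero_not_mem hC (h ▸ hb)
  obtain ⟨hMpos, _, hMmem⟩ := Mf_mem hC (subset_closure hb) hb0 ha
  set M := Mf C b a with hMdef
  have h1α : (0:ℝ) < 1 - α := by linarith
  have hwα : wpt a b α ∈ C := wpt_mem_C hC ha hb ⟨hα, by linarith⟩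
  have h1 : Mf C a (wpt a b α) ≤ 1 / (1 - α) := by
    apply Mf_le
    refine ⟨by positivity, ?_⟩
    have e1 : 1 / (1 - α) * (1 - α) = 1 := by field_simp
    have e2 : 1 / (1 - α) * α = α / (1 - α) := by ring
    have heq : (1 / (1 - α)) • wpt a b α - a = (α / (1 - α)) • b := by
      rw [smul_wpt, e1, e2]
      module
    rw [heq]
    exact clC_smul hC (subset_closure hb) (div_nonneg hα h1α.le)
  have h2 : Mf C (wpt a b α) a ≤ (1 - α) + α * M := by
    apply Mf_le
    refine ⟨by nlinarith [mul_nonneg hα hMpos.le], ?_⟩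
    have heq : ((1 - α) + α * M) • a - wpt a b α = α • (M • a - b) := by
      unfold wpt
      module
    rw [heq]
    exact clC_smul hC hMmem hα
  have hlog1 : coneDist C a (wpt a b α) ≤ Real.log ((1 / (1 - α)) * ((1 - α) + α * M)) :=
    coneDist_le_log hC ha hwα h1 h2
  have hMapos : (0:ℝ) < (1 - α) + α * M := by nlinarith [mul_nonneg hα hMpos.le]
  have hargpos : (0:ℝ) < (1 / (1 - α)) * ((1 - α) + α * M) :=
    mul_pos (by positivity) hMapos
  have hlog2 := Real.log_le_sub_one_of_pos hargpos
  have heq2 : (1 / (1 - α)) * ((1 - α) + α * M) - 1 = α * M / (1 - α) := by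
    field_simp
    ring
  have hle3 : α * M / (1 - α) ≤ 2 * α * M := by
    rw [div_le_iff₀ h1α]
    nlinarith [mul_nonneg (mul_nonneg hα hMpos.le) (by linarith : (0:ℝ) ≤ 1 - 2*α)]
  linarith

lemma dist_endpoint_right {α : ℝ} (hα : 1/2 ≤ α) (hα1 : α ≤ 1) :
    coneDist C b (wpt a b α) ≤ 2 * (1 - α) * Mf C a b := by
  rw [wpt_swap]
  exact dist_endpoint_left hC hb ha (by linarith) (by linarith)

set_option maxHeartbeats 1000000 in
/-- The chain subdivision lemma. -/
lemma exists_chain {δ : ℝ} (hδ : 0 < δ) :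
    ∃ N : ℕ, 0 < N ∧ ∃ u : ℕ → ℝ, u 0 = 0 ∧ u N = 1 ∧
      (∀ i, u i ∈ Icc (0:ℝ) 1) ∧ (∀ i, u i ≤ u (i+1)) ∧
      (∀ i, ∀ α β : ℝ, α ∈ Icc (u i) (u (i+1)) → β ∈ Icc (u i) (u (i+1)) →
        coneDist C (wpt a b α) (wpt a b β) ≤ δ) := by
  set M1 := Mf C b a with hM1def
  set M2 := Mf C a b with hM2def
  have hM1pos : 0 < M1 := Mf_pos hC hb ha
  have hM2pos : 0 < M2 := Mf_pos hC ha hb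
  set θ : ℝ := min (1/2) (δ / (8 * (M1 + M2 + 1))) with hθdef
  have hθpos : 0 < θ := lt_min (by norm_num) (by positivity)
  have hθhalf : θ ≤ 1/2 := min_le_left _ _
  have hθδ : θ ≤ δ / (8 * (M1 + M2 + 1)) := min_le_right _ _
  set η : ℝ := min (θ/2) (δ * θ^2 / 4) with hηdef
  have hηpos : 0 < η := lt_min (by positivity) (by positivity)
  have hηθ : η ≤ θ/2 := min_le_left _ _
  have hηδ : η ≤ δ * θ^2 / 4 := min_le_right _ _
  have h8 : θ * (8 * (M1 + M2 + 1)) ≤ δ := by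
    rw [← le_div_iff₀ (by positivity : (0:ℝ) < 8 * (M1 + M2 + 1))]
    exact hθδ
  set N : ℕ := ⌈(1:ℝ)/η⌉₊ with hNdef
  have hNpos : 0 < N := by
    rw [hNdef]
    apply Nat.ceil_pos.2
    positivity
  have hNη : 1 ≤ (N:ℝ) * η := by
    have h := Nat.le_ceil ((1:ℝ)/η)
    rw [← hNdef] at h
    rwa [div_le_iff₀ hηpos] at h
  have h4 : 4 * η ≤ δ * θ^2 := by linarith
  clear_value M1 M2 θ η N
  clear hθdef hηdef hNdef hθδ hηδ
  refine ⟨N, hNpos, fun i => min ((i:ℝ) * η) 1, by simp, min_eq_right hNη, ?_, ?_, ?_⟩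
  · intro i
    exact ⟨le_min (by positivity) zero_le_one, min_le_right _ _⟩
  · intro i
    apply min_le_min _ (le_refl 1)
    push_cast
    nlinarith [hηpos.le]
  · intro i α β hαm hβm
    push_cast at hαm hβm
    have hint : min (((i:ℝ)+1) * η) 1 - min ((i:ℝ) * η) 1 ≤ η := by
      rcases le_or_gt (((i:ℝ)+1)*η) 1 with h | h
      · rw [min_eq_left h, min_eq_left (by nlinarith [hηpos.le] : (i:ℝ)*η ≤ 1)]
        nlinarith [hηpos.le]
      · rw [min_eq_right h.le]
        rcases le_or_gt ((i:ℝ)*η) 1 with h2 | h2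
        · rw [min_eq_left h2]
          nlinarith
        · rw [min_eq_right h2.le]
          linarith [hηpos.le]
    have hL0 : (0:ℝ) ≤ min ((i:ℝ) * η) 1 := le_min (by positivity) zero_le_one
    have hR1 : min (((i:ℝ)+1) * η) 1 ≤ 1 := min_le_right _ _
    suffices hord : ∀ α β : ℝ, α ∈ Icc (min ((i:ℝ) * η) 1) (min (((i:ℝ)+1) * η) 1) →
        β ∈ Icc (min ((i:ℝ) * η) 1) (min (((i:ℝ)+1) * η) 1) → α ≤ β →
        coneDist C (wpt a b α) (wpt a b β) ≤ δ by
      rcases le_total α β with h | h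
      · exact hord α β hαm hβm h
      · rw [coneDist_symm]
        exact hord β α hβm hαm h
    clear hαm hβm α β
    intro α β hαm hβm hαβ
    have hα0 : 0 ≤ α := le_trans hL0 hαm.1
    have hβ1 : β ≤ 1 := le_trans hβm.2 hR1
    have hα1 : α ≤ 1 := le_trans hαβ hβ1
    have hβ0 : 0 ≤ β := le_trans hα0 hαβ
    have hβα : β - α ≤ η := by
      have h1 := hαm.1
      have h2 := hβm.2
      linarith
    have hwα : wpt a b α ∈ C := wpt_mem_C hC ha hb ⟨hα0, hα1⟩
    have hwβ : wpt a b β ∈ C := wpt_mem_C hC ha hb ⟨hβ0, hβ1⟩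
    rcases le_or_gt β θ with hcase1 | hcase1
    · -- both near a
      have hdα : coneDist C a (wpt a b α) ≤ 2 * α * M1 := by
        rw [hM1def]
        exact dist_endpoint_left hC ha hb hα0 (by linarith)
      have hdβ : coneDist C a (wpt a b β) ≤ 2 * β * M1 := by
        rw [hM1def]
        exact dist_endpoint_left hC ha hb hβ0 (by linarith)
      have htri : coneDist C (wpt a b α) (wpt a b β) ≤
          coneDist C (wpt a b α) a + coneDist C a (wpt a b β) :=
        coneDist_triangle hC hwα ha hwβ
      rw [coneDist_symm C (wpt a b α) a] at htri
      have hb1 : 2 * α * M1 ≤ 2 * θ * M1 := by nlinarith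
      have hb2 : 2 * β * M1 ≤ 2 * θ * M1 := by nlinarith
      nlinarith [mul_nonneg hθpos.le hM2pos.le, hθpos.le]
    rcases le_or_gt (1 - θ) α with hcase2 | hcase2
    · -- both near b
      have hdα : coneDist C b (wpt a b α) ≤ 2 * (1 - α) * M2 := by
        rw [hM2def]
        exact dist_endpoint_right hC ha hb (by linarith) hα1
      have hdβ : coneDist C b (wpt a b β) ≤ 2 * (1 - β) * M2 := by
        rw [hM2def]
        exact dist_endpoint_right hC ha hb (by linarith) hβ1
      have htri : coneDist C (wpt a b α) (wpt a b β) ≤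
          coneDist C (wpt a b α) b + coneDist C b (wpt a b β) :=
        coneDist_triangle hC hwα hb hwβ
      rw [coneDist_symm C (wpt a b α) b] at htri
      have hb1 : 2 * (1 - α) * M2 ≤ 2 * θ * M2 := by nlinarith
      have hb2 : 2 * (1 - β) * M2 ≤ 2 * θ * M2 := by nlinarith
      nlinarith [mul_nonneg hθpos.le hM1pos.le, hθpos.le]
    · -- middle
      have hαlow : θ/2 ≤ α := by linarith
      have hβhigh : β ≤ 1 - θ/2 := by linarith
      have hαpos : 0 < α := by linarith
      have hβlt : β < 1 := by linarith
      have h1β : (0:ℝ) < 1 - β := by linarith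
      have hbase := dist_wpt_le hC ha hb hαpos hαβ hβlt
      have hargpos : 0 < ((1 - α) / (1 - β)) * (β / α) := by
        have h1 : (0:ℝ) < 1 - α := by linarith
        have h2 : (0:ℝ) < β := by linarith
        exact mul_pos (div_pos h1 h1β) (div_pos h2 hαpos)
      have harg : ((1 - α) / (1 - β)) * (β / α) - 1 = (β - α) / (α * (1 - β)) := by
        field_simp
        ring
      have hprod : θ/2 * (θ/2) ≤ α * (1 - β) :=
        mul_le_mul hαlow (by linarith) (by linarith) hα0
      have hfinal : (β - α) / (α * (1 - β)) ≤ δ := by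
        rw [div_le_iff₀ (by nlinarith : (0:ℝ) < α * (1 - β))]
        have hd1 : δ * (θ/2 * (θ/2)) ≤ δ * (α * (1 - β)) :=
          mul_le_mul_of_nonneg_left hprod hδ.le
        have hd2 : δ * (θ/2 * (θ/2)) = δ * θ^2 / 4 := by ring
        linarith
      calc coneDist C (wpt a b α) (wpt a b β)
          ≤ Real.log (((1 - α) / (1 - β)) * (β / α)) := hbase
        _ ≤ ((1 - α) / (1 - β)) * (β / α) - 1 := Real.log_le_sub_one_of_pos hargpos
        _ = (β - α) / (α * (1 - β)) := harg
        _ ≤ δ := hfinal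

end Seg

section Aux

variable (hC : IsProperConvexCone C)
include hC

lemma dist_endpoint_all {a b : Vd d} (ha : a ∈ C) (hb : b ∈ C) {α : ℝ}
    (hα : α ∈ Icc (0:ℝ) 1) :
    coneDist C a (wpt a b α) ≤ Mf C b a + Mf C a b + coneDist C a b := by
  have hM1 := Mf_pos hC hb ha
  have hM2 := Mf_pos hC ha hb
  have hd := coneDist_nonneg hC ha hb
  rcases le_or_gt α (1/2) with h | h
  · have := dist_endpoint_left hC ha hb hα.1 h
    nlinarith [hα.1]
  · have h1 := dist_endpoint_right hC ha hb h.le hα.2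
    have htri : coneDist C a (wpt a b α) ≤
        coneDist C a b + coneDist C b (wpt a b α) :=
      coneDist_triangle hC ha hb (wpt_mem_C hC ha hb hα)
    nlinarith [hα.2]

lemma segCone_pair_bound {a b : Vd d} (ha : a ∈ C) (hb : b ∈ C) {v v' : Vd d}
    (hv : v ∈ segCone a b) (hv' : v' ∈ segCone a b) :
    coneDist C v v' ≤ 2 * (Mf C b a + Mf C a b + coneDist C a b) := by
  obtain ⟨c, hc, α, hα, rfl⟩ := segCone_ray hv
  obtain ⟨c', hc', β, hβ, rfl⟩ := segCone_ray hv'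
  rw [coneDist_smul hC hc hc']
  have hwα := wpt_mem_C hC ha hb hα
  have hwβ := wpt_mem_C hC ha hb hβ
  have htri : coneDist C (wpt a b α) (wpt a b β) ≤
      coneDist C (wpt a b α) a + coneDist C a (wpt a b β) :=
    coneDist_triangle hC hwα ha hwβ
  rw [coneDist_symm C (wpt a b α) a] at htri
  have h1 := dist_endpoint_all hC ha hb hα
  have h2 := dist_endpoint_all hC ha hb hβ
  linarith

omit hC in
lemma segCone_zpow_image (g : Matrix.GeneralLinearGroup (Fin (d + 1)) ℝ) (n : ℤ)
    (x y : Vd d) {v : Vd d}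
    (hv : v ∈ segCone ((zpowMat g n).mulVec x) ((zpowMat g n).mulVec y)) :
    ∃ w ∈ segCone x y, v = (zpowMat g n).mulVec w := by
  obtain ⟨s, t, hs, ht, hst, rfl⟩ := hv
  refine ⟨s • x + t • y, ⟨s, t, hs, ht, hst, rfl⟩, ?_⟩
  rw [Matrix.mulVec_add, Matrix.mulVec_smul, Matrix.mulVec_smul]

lemma openSeg_sub_C_of_mem {p q : Vd d} (hp : p ∈ C) (hq : q ∈ closure C) :
    openSegCone p q ⊆ C := by
  rintro v ⟨s, t, hs, ht, rfl⟩
  exact C_add_clC hC (hC.2.2.2.1 _ hp _ hs) (clC_smul hC hq ht.le)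

lemma openSeg_sub_C_of_mem' {p q : Vd d} (hp : p ∈ closure C) (hq : q ∈ C) :
    openSegCone p q ⊆ C := by
  rintro v ⟨s, t, hs, ht, rfl⟩
  rw [add_comm]
  exact C_add_clC hC (hC.2.2.2.1 _ hq _ ht) (clC_smul hC hp hs.le)

lemma combo_ne_zero {p q : Vd d} (hp : p ∈ closure C) (hq : q ∈ closure C)
    (hp0 : p ≠ 0) (hq0 : q ≠ 0) {u : ℝ} (hu : u ∈ Icc (0:ℝ) 1) :
    u • p + (1 - u) • q ≠ 0 := by
  intro h
  have hneg : -(u • p) ∈ closure C := by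
    have : -(u • p) = (1 - u) • q := by
      have := h
      rw [add_eq_zero_iff_neg_eq] at this
      exact this
    rw [this]
    exact clC_smul hC hq (by linarith [hu.2])
  have h0 : u • p = 0 := Cproper hC _ (clC_smul hC hp hu.1) hneg
  rcases smul_eq_zero.1 h0 with h1 | h1
  · rw [h1] at h
    simp only [zero_smul, zero_add, sub_zero, one_smul] at h
    exact hq0 h
  · exact hp0 h1

lemma openSeg_sub_C_of_combo {p q z : Vd d} {u : ℝ} (hu : u ∈ Icc (0:ℝ) 1)
    (hp : p ∈ closure C) (hq : q ∈ closure C)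
    (hz : z ∈ C) (hzdef : z = u • p + (1 - u) • q) :
    openSegCone p q ⊆ C := by
  rcases eq_or_lt_of_le hu.1 with hu0 | hu0
  · have : z = q := by
      rw [hzdef, ← hu0]
      module
    exact openSeg_sub_C_of_mem' hC hp (this ▸ hz)
  rcases eq_or_lt_of_le hu.2 with hu1 | hu1
  · have : z = p := by
      rw [hzdef, hu1]
      module
    exact openSeg_sub_C_of_mem hC (this ▸ hz) hq
  · rintro v ⟨s, t, hs, ht, rfl⟩
    have h1u : (0:ℝ) < 1 - u := by linarith
    set lam : ℝ := min (s / u) (t / (1 - u)) with hlam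
    have hlampos : 0 < lam := lt_min (div_pos hs hu0) (div_pos ht h1u)
    have hlu : lam * u ≤ s := by
      have := min_le_left (s / u) (t / (1 - u))
      rw [hlam]
      calc min (s / u) (t / (1 - u)) * u ≤ s / u * u :=
        mul_le_mul_of_nonneg_right this hu.1
        _ = s := by field_simp
    have hlv : lam * (1 - u) ≤ t := by
      have := min_le_right (s / u) (t / (1 - u))
      rw [hlam]
      calc min (s / u) (t / (1 - u)) * (1 - u) ≤ t / (1 - u) * (1 - u) :=
        mul_le_mul_of_nonneg_right this h1u.le
        _ = t := by field_simp
    have hdecomp : s • p + t • q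
        = lam • z + ((s - lam * u) • p + (t - lam * (1 - u)) • q) := by
      rw [hzdef]
      module
    rw [hdecomp]
    exact C_add_clC hC (hC.2.2.2.1 _ hz _ hlampos)
      (clC_add hC (clC_smul hC hp (by linarith)) (clC_smul hC hq (by linarith)))

lemma Mf_le_ball {y : Vd d} (hy : y ∈ C) {r : ℝ} (hr : 0 < r)
    (hball : Metric.ball y r ⊆ C) (x : Vd d) :
    Mf C x y ≤ 1 + ‖x‖ / r := by
  apply Mf_le
  set t : ℝ := 1 + ‖x‖ / r with htdef
  have ht : 0 < t := by positivity
  refine ⟨ht, ?_⟩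
  have hmem : y - t⁻¹ • x ∈ C := by
    apply hball
    refine Metric.mem_ball.2 ?_
    rw [dist_eq_norm]
    have hnn : ‖y - t⁻¹ • x - y‖ = ‖x‖ / t := by
      rw [sub_sub_cancel_left, norm_neg, norm_smul, Real.norm_eq_abs,
        abs_of_pos (by positivity), inv_mul_eq_div]
    rw [hnn, div_lt_iff₀ ht]
    have hrt : r * t = r + ‖x‖ := by
      rw [htdef, mul_add, mul_one, mul_div_cancel₀ _ hr.ne']
    linarith
  have := hC.2.2.2.1 _ hmem t ht
  rw [smul_sub, smul_smul, mul_inv_cancel₀ ht.ne', one_smul] at this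
  exact subset_closure this

/-- If a sequence in `C` converges to a nonzero limit while staying at bounded
cone-distance from a basepoint, the limit is in `C`. -/
lemma limit_in_C {x₀ : Vd d} (hx₀ : x₀ ∈ C) {v : ℕ → Vd d} (hvC : ∀ k, v k ∈ C)
    {z : Vd d} (hz0 : z ≠ 0) (hlim : Tendsto v atTop (nhds z)) {B : ℝ}
    (hd : ∀ k, coneDist C x₀ (v k) ≤ B) : z ∈ C := by
  obtain ⟨r, hr, hball⟩ := Metric.isOpen_iff.1 hC.1 x₀ hx₀
  have hzcl : z ∈ closure C :=
    isClosed_closure.mem_of_tendsto hlim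
      (Filter.Eventually.of_forall fun k => subset_closure (hvC k))
  -- s k = Mf C (v k) x₀ is bounded
  have hnormlim : Tendsto (fun k => 1 + ‖v k‖ / r) atTop (nhds (1 + ‖z‖ / r)) := by
    have := (hlim.norm).div_const r
    exact (tendsto_const_nhds (x := (1:ℝ))).add this
  obtain ⟨S, hS⟩ := hnormlim.bddAbove_range
  have hsmem : ∀ k, Mf C (v k) x₀ ∈ Icc (0:ℝ) S := by
    intro k
    refine ⟨(Mf_pos hC (hvC k) hx₀).le, ?_⟩
    calc Mf C (v k) x₀ ≤ 1 + ‖v k‖ / r := Mf_le_ball hC hx₀ hr hball (v k)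
      _ ≤ S := hS ⟨k, rfl⟩
  obtain ⟨sl, hslmem, φ₁, hφ₁, hsl⟩ :=
    IsCompact.tendsto_subseq (isCompact_Icc (a := (0:ℝ)) (b := S))
      (x := fun k => Mf C (v k) x₀) hsmem
  have hvne : ∀ k, v k ≠ 0 := fun k h => zero_not_mem hC (h ▸ hvC k)
  have hattain_s : ∀ k, (Mf C (v k) x₀) • x₀ - v k ∈ closure C := fun k =>
    (Mf_mem hC (subset_closure (hvC k)) (hvne k) hx₀).2.2
  rcases eq_or_lt_of_le hslmem.1 with hs0 | hs0
  · -- sl = 0 : contradiction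
    exfalso
    have hlim2 : Tendsto (fun k => (Mf C (v (φ₁ k)) x₀) • x₀ - v (φ₁ k)) atTop
        (nhds (sl • x₀ - z)) :=
      (hsl.smul_const x₀).sub (hlim.comp hφ₁.tendsto_atTop)
    have hmem2 : sl • x₀ - z ∈ closure C :=
      isClosed_closure.mem_of_tendsto hlim2
        (Filter.Eventually.of_forall fun k => hattain_s (φ₁ k))
    rw [← hs0, zero_smul, zero_sub] at hmem2
    exact hz0 (Cproper hC z hzcl hmem2)
  · -- sl > 0
    set pr : ℕ → ℝ := fun k => Mf C x₀ (v k) * Mf C (v k) x₀ with hprdef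
    have hprmem : ∀ k, pr k ∈ Icc (1:ℝ) (Real.exp B) := by
      intro k
      constructor
      · exact one_le_Mf_mul hC hx₀ (hvC k)
      · have h1 : (0:ℝ) < pr k :=
          lt_of_lt_of_le one_pos (one_le_Mf_mul hC hx₀ (hvC k))
        have h2 : Real.log (pr k) ≤ B := hd k
        exact (Real.log_le_iff_le_exp h1).1 h2
    obtain ⟨pl, hplmem, φ₂, hφ₂, hpl⟩ :=
      IsCompact.tendsto_subseq (isCompact_Icc (a := (1:ℝ)) (b := Real.exp B))
        (x := fun k => pr (φ₁ k)) (fun k => hprmem (φ₁ k))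
    have hslim : Tendsto (fun k => Mf C (v (φ₁ (φ₂ k))) x₀) atTop (nhds sl) :=
      hsl.comp hφ₂.tendsto_atTop
    have htlim : Tendsto (fun k => Mf C x₀ (v (φ₁ (φ₂ k)))) atTop (nhds (pl / sl)) := by
      have hdiv : Tendsto (fun k => pr (φ₁ (φ₂ k)) / Mf C (v (φ₁ (φ₂ k))) x₀) atTop
          (nhds (pl / sl)) := hpl.div hslim hs0.ne'
      apply hdiv.congr
      intro k
      have hne : Mf C (v (φ₁ (φ₂ k))) x₀ ≠ 0 := (Mf_pos hC (hvC _) hx₀).ne'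
      rw [hprdef]
      exact mul_div_cancel_right₀ _ hne
    have htlpos : 0 < pl / sl := div_pos (lt_of_lt_of_le one_pos hplmem.1) hs0
    have hattain_t : ∀ k, (Mf C x₀ (v k)) • (v k) - x₀ ∈ closure C := fun k =>
      (Mf_mem hC (subset_closure hx₀) (fun h => zero_not_mem hC (h ▸ hx₀)) (hvC k)).2.2
    have hlim3 : Tendsto (fun k => (Mf C x₀ (v (φ₁ (φ₂ k)))) • (v (φ₁ (φ₂ k))) - x₀)
        atTop (nhds ((pl / sl) • z - x₀)) := by
      have hvlim : Tendsto (fun k => v (φ₁ (φ₂ k))) atTop (nhds z) :=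
        (hlim.comp hφ₁.tendsto_atTop).comp hφ₂.tendsto_atTop
      exact (htlim.smul hvlim).sub_const x₀
    have hmem3 : (pl / sl) • z - x₀ ∈ closure C :=
      isClosed_closure.mem_of_tendsto hlim3
        (Filter.Eventually.of_forall fun k => hattain_t (φ₁ (φ₂ k)))
    have hzC : (pl / sl) • z ∈ C := by
      have : x₀ + ((pl / sl) • z - x₀) ∈ C := C_add_clC hC hx₀ hmem3
      rwa [add_sub_cancel] at this
    have := hC.2.2.2.1 _ hzC ((pl / sl)⁻¹) (by positivity)
    rwa [smul_smul, inv_mul_cancel₀ htlpos.ne', one_smul] at this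

end Aux

section Main

set_option maxHeartbeats 2000000

variable (hC : IsProperConvexCone C) {g : Matrix.GeneralLinearGroup (Fin (d + 1)) ℝ}
  (hpres : PreservesCone C (g : Matrix (Fin (d + 1)) (Fin (d + 1)) ℝ))

include hC hpres

lemma main_construction
    (x₀ y₀ : Vd d) (hx₀ : x₀ ∈ C) (hy₀ : y₀ ∈ C)
    (K Cq : ℝ) (hK : 1 ≤ K) (hCq : 0 ≤ Cq)
    (hqg : ∀ m n : ℤ, |(m : ℝ) - (n : ℝ)| / K - Cq ≤
        coneDist C ((zpowMat g m).mulVec y₀) ((zpowMat g n).mulVec y₀) ∧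
      coneDist C ((zpowMat g m).mulVec y₀) ((zpowMat g n).mulVec y₀) ≤
        K * |(m : ℝ) - (n : ℝ)| + Cq)
    (S : Set (Vd d)) (hSsub : S ⊆ C) (hy₀S : y₀ ∈ S)
    (hSinv : ∀ n : ℤ, ∀ v ∈ S, (zpowMat g n).mulVec v ∈ S)
    (Cc : ℝ) (π : Vd d → Vd d) (hπS : ∀ x ∈ C, π x ∈ S)
    (hπnear : ∀ x ∈ S, coneDist C x (π x) ≤ Cc)
    (hπcontr : ∀ x ∈ C, ∀ y ∈ C, Cc ≤ coneDist C (π x) (π y) →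
      (∃ p ∈ segCone x y, coneDist C p (π x) ≤ Cc) ∧
      (∃ p ∈ segCone x y, coneDist C p (π y) ≤ Cc))
    (R : ℝ) (hcob : ∀ v ∈ S, ∃ n : ℤ, coneDist C v ((zpowMat g n).mulVec y₀) ≤ R) :
    ∃ B : ℝ, 0 ≤ B ∧ ∃ T : ℕ, ∀ n m : ℕ, T ≤ n → T ≤ m →
      ∃ v ∈ segCone ((zpowMat g (n:ℤ)).mulVec x₀) ((zpowMat g (-(m:ℤ))).mulVec x₀),
        coneDist C x₀ v ≤ B := by
  have hK0 : (0:ℝ) < K := lt_of_lt_of_le one_pos hK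
  set X : ℤ → Vd d := fun j => (zpowMat g j).mulVec x₀ with hXdef
  set P : ℤ → Vd d := fun j => (zpowMat g j).mulVec y₀ with hPdef
  have hXC : ∀ j, X j ∈ C := fun j => (zpow_mem_C_iff g hpres j).2 hx₀
  have hPS : ∀ j, P j ∈ S := fun j => hSinv j y₀ hy₀S
  have hPC : ∀ j, P j ∈ C := fun j => hSsub (hPS j)
  have hP0 : P 0 = y₀ := zpowMat_zero_mulVec g y₀
  have hCc0 : 0 ≤ Cc :=
    le_trans (coneDist_nonneg hC hy₀ (hSsub (hπS y₀ hy₀))) (hπnear y₀ hy₀S)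
  have hR0 : 0 ≤ R := by
    obtain ⟨j, hj⟩ := hcob y₀ hy₀S
    exact le_trans (coneDist_nonneg hC hy₀ (hPC j)) hj
  set D0 : ℝ := coneDist C x₀ y₀ with hD0def
  have hD0 : 0 ≤ D0 := coneDist_nonneg hC hx₀ hy₀
  set Dab : ℝ := Mf C y₀ x₀ + Mf C x₀ y₀ + D0 with hDabdef
  have hDab : 0 ≤ Dab := by
    have := Mf_pos hC hy₀ hx₀
    have := Mf_pos hC hx₀ hy₀
    rw [hDabdef]
    linarith
  set Dside : ℝ := 2 * Dab with hDsidedef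
  have hDside : 0 ≤ Dside := by rw [hDsidedef]; linarith
  have hXP : ∀ j, coneDist C (X j) (P j) = D0 := fun j =>
    coneDist_zpow g hpres j x₀ y₀
  -- pair bound on the side segments [X j, P j]
  have hsidepair : ∀ j : ℤ, ∀ v ∈ segCone (X j) (P j), ∀ v' ∈ segCone (X j) (P j),
      coneDist C v v' ≤ Dside := by
    intro j v hv v' hv'
    obtain ⟨w, hw, rfl⟩ := segCone_zpow_image g j x₀ y₀ hv
    obtain ⟨w', hw', rfl⟩ := segCone_zpow_image g j x₀ y₀ hv'
    rw [coneDist_zpow g hpres j w w']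
    exact segCone_pair_bound hC hx₀ hy₀ hw hw'
  -- the projection moves by at most 2Cc + B' across a segment with pair bound B'
  have hjump : ∀ x ∈ C, ∀ x' ∈ C, ∀ B' : ℝ, 0 ≤ B' →
      (∀ v ∈ segCone x x', ∀ v' ∈ segCone x x', coneDist C v v' ≤ B') →
      coneDist C (π x) (π x') ≤ 2 * Cc + B' := by
    intro x hx x' hx' B' hB' hpair
    have hπx : π x ∈ C := hSsub (hπS x hx)
    have hπx' : π x' ∈ C := hSsub (hπS x' hx')
    by_cases hcc : Cc ≤ coneDist C (π x) (π x')
    · obtain ⟨⟨v, hv, hvd⟩, ⟨v', hv', hvd'⟩⟩ := hπcontr x hx x' hx' hcc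
      have hvC : v ∈ C := segCone_subset_C hC hx hx' hv
      have hv'C : v' ∈ C := segCone_subset_C hC hx hx' hv'
      have t1 : coneDist C (π x) (π x') ≤
          coneDist C (π x) v + coneDist C v (π x') :=
        coneDist_triangle hC hπx hvC hπx'
      have t2 : coneDist C v (π x') ≤
          coneDist C v v' + coneDist C v' (π x') :=
        coneDist_triangle hC hvC hv'C hπx'
      have e1 : coneDist C (π x) v = coneDist C v (π x) := coneDist_symm C _ _
      have hp := hpair v hv v' hv'
      linarith [hvd, hvd']
    · push_neg at hcc
      linarith
  -- calibration of π on the orbit of x₀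
  set Bend : ℝ := 3 * Cc + Dside with hBenddef
  have hBend : 0 ≤ Bend := by rw [hBenddef]; linarith
  have hπX : ∀ j : ℤ, coneDist C (π (X j)) (P j) ≤ Bend := by
    intro j
    have h1 : coneDist C (π (X j)) (π (P j)) ≤ 2 * Cc + Dside :=
      hjump (X j) (hXC j) (P j) (hPC j) Dside hDside (hsidepair j)
    have h2 : coneDist C (π (P j)) (P j) ≤ Cc := by
      rw [coneDist_symm]
      exact hπnear (P j) (hPS j)
    have t1 : coneDist C (π (X j)) (P j) ≤
        coneDist C (π (X j)) (π (P j)) + coneDist C (π (P j)) (P j) :=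
      coneDist_triangle hC (hSsub (hπS _ (hXC j))) (hSsub (hπS _ (hPC j))) (hPC j)
    rw [hBenddef]
    linarith
  -- index function on S
  have hidx0 : ∀ w : Vd d, ∃ j : ℤ, w ∈ S → coneDist C w (P j) ≤ R := by
    intro w
    by_cases h : w ∈ S
    · obtain ⟨j, hj⟩ := hcob w h
      exact ⟨j, fun _ => hj⟩
    · exact ⟨0, fun h' => absurd h' h⟩
  choose idx hidx using hidx0
  -- comparison of indices
  have hcomp : ∀ w ∈ S, ∀ w' ∈ S, ∀ B' : ℝ, coneDist C w w' ≤ B' →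
      |(idx w : ℝ) - (idx w' : ℝ)| ≤ K * (2 * R + B' + Cq) := by
    intro w hw w' hw' B' hB'
    have hwC : w ∈ C := hSsub hw
    have hw'C : w' ∈ C := hSsub hw'
    have hlow := (hqg (idx w) (idx w')).1
    have t1 : coneDist C (P (idx w)) (P (idx w')) ≤
        coneDist C (P (idx w)) w + coneDist C w (P (idx w')) :=
      coneDist_triangle hC (hPC _) hwC (hPC _)
    have t2 : coneDist C w (P (idx w')) ≤
        coneDist C w w' + coneDist C w' (P (idx w')) :=
      coneDist_triangle hC hwC hw'C (hPC _)
    have e1 : coneDist C (P (idx w)) w = coneDist C w (P (idx w)) := coneDist_symm C _ _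
    have h1 := hidx w hw
    have h2 := hidx w' hw'
    have hd : coneDist C (P (idx w)) (P (idx w')) ≤ 2 * R + B' + Cq - Cq := by
      linarith
    have : |(idx w : ℝ) - (idx w' : ℝ)| / K ≤ 2 * R + B' + Cq := by
      have := hlow
      simp only [hPdef] at hd
      linarith
    calc |(idx w : ℝ) - (idx w' : ℝ)| = |(idx w : ℝ) - (idx w' : ℝ)| / K * K := by
          field_simp
      _ ≤ (2 * R + B' + Cq) * K := mul_le_mul_of_nonneg_right this hK0.le
      _ = K * (2 * R + B' + Cq) := by ring
  -- constants
  set Bj : ℝ := 2 * Cc + 1 with hBjdef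
  set J : ℝ := K * (2 * R + Bj + Cq) with hJdef
  have hJ0 : 0 ≤ J := by
    rw [hJdef, hBjdef]
    have : (0:ℝ) ≤ 2*R + (2*Cc+1) + Cq := by linarith
    positivity
  set Jend : ℝ := K * (2 * R + (Bend + R) + Cq) with hJenddef
  have hJend0 : 0 ≤ Jend := by
    rw [hJenddef]
    have : (0:ℝ) ≤ 2*R + (Bend + R) + Cq := by linarith
    positivity
  set B1 : ℝ := D0 + (K * J + Cq) + R with hB1def
  refine ⟨B1 + Cc, by rw [hB1def]; positivity, ?_⟩
  set Tr : ℝ := Jend + J + K * (Cq + 2 * R + Cc) + 1 with hTrdef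
  refine ⟨⌈Tr⌉₊, ?_⟩
  intro n m hn hm
  have hnr : Tr ≤ (n:ℝ) := le_trans (Nat.le_ceil Tr) (by exact_mod_cast hn)
  have hmr : Tr ≤ (m:ℝ) := le_trans (Nat.le_ceil Tr) (by exact_mod_cast hm)
  set a : Vd d := X (n:ℤ) with hadef
  set b : Vd d := X (-(m:ℤ)) with hbdef
  have haC : a ∈ C := hXC _
  have hbC : b ∈ C := hXC _
  obtain ⟨N, hNpos, u, hu0, huN, humem, humono, hupair⟩ :=
    exists_chain hC haC hbC (δ := 1) one_pos
  set w : ℕ → Vd d := fun i => wpt a b (u i) with hwdef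
  have hwC : ∀ i, w i ∈ C := fun i => wpt_mem_C hC haC hbC (humem i)
  have hw0 : w 0 = a := by rw [hwdef]; simp only [hu0, wpt_zero]
  have hwN : w N = b := by rw [hwdef]; simp only [huN, wpt_one]
  set j : ℕ → ℤ := fun i => idx (π (w i)) with hjdef
  have hπwS : ∀ i, π (w i) ∈ S := fun i => hπS _ (hwC i)
  have hπwC : ∀ i, π (w i) ∈ C := fun i => hSsub (hπwS i)
  have hjR : ∀ i, coneDist C (π (w i)) (P (j i)) ≤ R := fun i =>
    hidx _ (hπwS i)
  -- consecutive chain pairs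
  have hpairchain : ∀ i, ∀ v ∈ segCone (w i) (w (i+1)), ∀ v' ∈ segCone (w i) (w (i+1)),
      coneDist C v v' ≤ 1 := by
    intro i v hv v' hv'
    obtain ⟨c, hc, γ, hγ, rfl⟩ := seg_between_ray hv
    obtain ⟨c', hc', γ', hγ', rfl⟩ := seg_between_ray hv'
    rw [min_eq_left (humono i), max_eq_right (humono i)] at hγ hγ'
    rw [coneDist_smul hC hc hc']
    exact hupair i γ γ' hγ hγ'
  have hconsec : ∀ i, |(j i : ℝ) - (j (i+1) : ℝ)| ≤ J := by
    intro i
    have hjmp : coneDist C (π (w i)) (π (w (i+1))) ≤ 2 * Cc + 1 :=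
      hjump (w i) (hwC i) (w (i+1)) (hwC (i+1)) 1 zero_le_one (hpairchain i)
    have := hcomp (π (w i)) (hπwS i) (π (w (i+1))) (hπwS (i+1)) (2 * Cc + 1) hjmp
    rw [hJdef, hBjdef]
    exact this
  -- endpoint calibration
  have hend0 : |(j 0 : ℝ) - (n : ℝ)| ≤ Jend := by
    have h1 : coneDist C (π (w 0)) (P (n:ℤ)) ≤ Bend := by
      rw [hw0, hadef]
      exact hπX (n:ℤ)
    have h2 : coneDist C (π (w 0)) (P (j 0)) ≤ R := hjR 0
    have hlow := (hqg (j 0) (n:ℤ)).1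
    have t1 : coneDist C (P (j 0)) (P (n:ℤ)) ≤
        coneDist C (P (j 0)) (π (w 0)) + coneDist C (π (w 0)) (P (n:ℤ)) :=
      coneDist_triangle hC (hPC _) (hπwC 0) (hPC _)
    have e1 : coneDist C (P (j 0)) (π (w 0)) = coneDist C (π (w 0)) (P (j 0)) :=
      coneDist_symm C _ _
    have hd : |(j 0 : ℝ) - ((n:ℤ) : ℝ)| / K - Cq ≤ R + Bend := by
      simp only [hPdef] at t1
      linarith
    have : |(j 0 : ℝ) - ((n:ℤ) : ℝ)| ≤ (2 * R + (Bend + R) + Cq) * K := by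
      rw [← div_le_iff₀ hK0]
      linarith
    rw [hJenddef]
    push_cast at this ⊢
    linarith
  have hendN : |(j N : ℝ) + (m : ℝ)| ≤ Jend := by
    have h1 : coneDist C (π (w N)) (P (-(m:ℤ))) ≤ Bend := by
      rw [hwN, hbdef]
      exact hπX (-(m:ℤ))
    have h2 : coneDist C (π (w N)) (P (j N)) ≤ R := hjR N
    have hlow := (hqg (j N) (-(m:ℤ))).1
    have t1 : coneDist C (P (j N)) (P (-(m:ℤ))) ≤
        coneDist C (P (j N)) (π (w N)) + coneDist C (π (w N)) (P (-(m:ℤ))) :=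
      coneDist_triangle hC (hPC _) (hπwC N) (hPC _)
    have e1 : coneDist C (P (j N)) (π (w N)) = coneDist C (π (w N)) (P (j N)) :=
      coneDist_symm C _ _
    push_cast at hlow
    have hd : |(j N : ℝ) - -(m:ℝ)| / K - Cq ≤ R + Bend := by
      simp only [hPdef] at t1
      linarith
    have h3 : |(j N : ℝ) - -(m:ℝ)| ≤ (2 * R + (Bend + R) + Cq) * K := by
      rw [← div_le_iff₀ hK0]
      linarith
    rw [sub_neg_eq_add] at h3
    rw [hJenddef]
    linarith
  -- j 0 is large positive, j N is negative
  have hj0big : J + K * (Cq + 2 * R + Cc) + 1 ≤ (j 0 : ℝ) := by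
    have h1 : (j 0 : ℝ) ≥ (n:ℝ) - Jend := by
      have := abs_le.1 hend0
      linarith [this.1]
    rw [hTrdef] at hnr
    linarith
  have hjNneg : (j N : ℝ) < 0 := by
    have h1 : (j N : ℝ) ≤ -(m:ℝ) + Jend := by
      have := abs_le.1 hendN
      linarith [this.2]
    rw [hTrdef] at hmr
    have hKC : 0 ≤ K * (Cq + 2 * R + Cc) := by positivity
    linarith
  -- find the crossing index
  classical
  set istar : ℕ := Nat.findGreatest (fun i => 0 ≤ j i) N with histardef
  have hQ0 : 0 ≤ j 0 := by
    have : (0:ℝ) < (j 0 : ℝ) := by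
      have hKC : 0 ≤ K * (Cq + 2 * R + Cc) := by positivity
      linarith
    exact_mod_cast this.le
  have hQstar : 0 ≤ j istar := by
    rw [histardef]
    exact Nat.findGreatest_spec (P := fun i => 0 ≤ j i) (Nat.zero_le N) hQ0
  have histarle : istar ≤ N := by
    rw [histardef]
    exact Nat.findGreatest_le (P := fun i => 0 ≤ j i) N
  have histarlt : istar < N := by
    rcases lt_or_eq_of_le histarle with h | h
    · exact h
    · exfalso
      rw [h] at hQstar
      have : (0:ℝ) ≤ (j N : ℝ) := by exact_mod_cast hQstar
      linarith
  have hQnext : ¬ (0 ≤ j (istar + 1)) := by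
    have h1 : istar < istar + 1 := Nat.lt_succ_self _
    rw [histardef] at h1 ⊢
    exact Nat.findGreatest_is_greatest (P := fun i => 0 ≤ j i) h1
      (by rw [← histardef]; exact histarlt)
  have hjnextneg : (j (istar+1) : ℝ) < 0 := by
    push_neg at hQnext
    exact_mod_cast hQnext
  have hjstarle : (j istar : ℝ) ≤ J := by
    have := abs_le.1 (hconsec istar)
    linarith [this.2]
  have hjstar0 : (0:ℝ) ≤ (j istar : ℝ) := by exact_mod_cast hQstar
  -- π (w istar) is near x₀
  have hd1 : coneDist C x₀ (π (w istar)) ≤ B1 := by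
    have hup := (hqg 0 (j istar)).2
    have habs : |((0:ℤ) : ℝ) - ((j istar) : ℝ)| = (j istar : ℝ) := by
      rw [abs_sub_comm]
      push_cast
      rw [sub_zero]
      exact abs_of_nonneg hjstar0
    rw [habs] at hup
    have hP0d : coneDist C (P 0) (P (j istar)) ≤ K * J + Cq := by
      have hKj : K * (j istar : ℝ) ≤ K * J := mul_le_mul_of_nonneg_left hjstarle hK0.le
      simp only [hPdef]
      linarith
    have t1 : coneDist C x₀ (P (j istar)) ≤
        coneDist C x₀ (P 0) + coneDist C (P 0) (P (j istar)) :=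
      coneDist_triangle hC hx₀ (hPC 0) (hPC _)
    have hx₀P0 : coneDist C x₀ (P 0) = D0 := by rw [hP0]
    have t2 : coneDist C x₀ (π (w istar)) ≤
        coneDist C x₀ (P (j istar)) + coneDist C (P (j istar)) (π (w istar)) :=
      coneDist_triangle hC hx₀ (hPC _) (hπwC istar)
    have e1 : coneDist C (P (j istar)) (π (w istar))
        = coneDist C (π (w istar)) (P (j istar)) := coneDist_symm C _ _
    have h2 := hjR istar
    rw [hB1def]
    linarith
  -- the contraction applies to the pair (w istar, a)
  have hlowd : Cc ≤ coneDist C (π (w istar)) (π (w 0)) := by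
    have hlow := (hqg (j istar) (j 0)).1
    have t1 : coneDist C (P (j istar)) (P (j 0)) ≤
        coneDist C (P (j istar)) (π (w istar)) + coneDist C (π (w istar)) (P (j 0)) :=
      coneDist_triangle hC (hPC _) (hπwC istar) (hPC _)
    have t2 : coneDist C (π (w istar)) (P (j 0)) ≤
        coneDist C (π (w istar)) (π (w 0)) + coneDist C (π (w 0)) (P (j 0)) :=
      coneDist_triangle hC (hπwC istar) (hπwC 0) (hPC _)
    have e1 : coneDist C (P (j istar)) (π (w istar))
        = coneDist C (π (w istar)) (P (j istar)) := coneDist_symm C _ _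
    have h2 := hjR istar
    have h3 := hjR 0
    have habs : |(j istar : ℝ) - (j 0 : ℝ)| = (j 0 : ℝ) - (j istar : ℝ) := by
      rw [abs_sub_comm]
      apply abs_of_nonneg
      have hKC : 0 ≤ K * (Cq + 2 * R + Cc) := mul_nonneg hK0.le (by linarith)
      linarith
    rw [habs] at hlow
    -- (j 0) - (j istar) ≥ K*(Cq + 2R + Cc) + 1
    have hgap : K * (Cq + 2 * R + Cc) + 1 ≤ (j 0 : ℝ) - (j istar : ℝ) := by
      linarith
    set dd : ℝ := coneDist C (π (w istar)) (π (w 0)) with hdddef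
    have hchain : ((j 0 : ℝ) - (j istar : ℝ)) / K - Cq ≤ 2 * R + dd := by
      simp only [hPdef] at t1 t2
      simp only [hdddef, hPdef]
      linarith
    have hmul : (j 0 : ℝ) - (j istar : ℝ) ≤ K * (Cq + 2 * R + dd) := by
      rw [← sub_le_iff_le_add] at hchain
      have := (div_le_iff₀ hK0).1 (by linarith : ((j 0 : ℝ) - (j istar : ℝ)) / K ≤ Cq + 2*R + dd)
      linarith [this]
    nlinarith [hK0]
  have hlowd' : Cc ≤ coneDist C (π (w istar)) (π a) := by
    rw [← hw0]
    exact hlowd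
  obtain ⟨⟨v, hv, hvd⟩, -⟩ := hπcontr (w istar) (hwC istar) a haC hlowd'
  have hvC : v ∈ C := segCone_subset_C hC (hwC istar) haC hv
  have hfinal : coneDist C x₀ v ≤ B1 + Cc := by
    have t1 : coneDist C x₀ v ≤
        coneDist C x₀ (π (w istar)) + coneDist C (π (w istar)) v :=
      coneDist_triangle hC hx₀ (hπwC istar) hvC
    have e1 : coneDist C (π (w istar)) v = coneDist C v (π (w istar)) :=
      coneDist_symm C _ _
    linarith
  -- v lies on the segment [a, b]
  have hv' : v ∈ segCone (wpt a b (u istar)) (wpt a b 0) := by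
    rw [wpt_zero]
    exact hv
  obtain ⟨c, hc, γ, hγ, rfl⟩ := seg_between_ray hv'
  rw [min_eq_right (humem istar).1, max_eq_left (humem istar).1] at hγ
  refine ⟨c • wpt a b γ, ?_, hfinal⟩
  exact smul_wpt_mem_segCone hc ⟨hγ.1, le_trans hγ.2 (humem istar).2⟩

end Main

end ConeProof


open ConeProof in
/-- If `γ` is a contracting element for `(Ω, PS^Ω)`, `p` is a projective accumulation
point of a forward orbit lying in `E_γ⁺` and `q` one of a backward orbit lying in `E_γ⁻`,
then the open segment `(p,q)` is contained in `Ω`. -/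
theorem contracting_orbit_limits_segment_in_domain {d : ℕ} (C : Set (Vd d))
    (hC : IsProperConvexCone C)
    (g : Matrix.GeneralLinearGroup (Fin (d + 1)) ℝ)
    (hpres : PreservesCone C (g : Matrix (Fin (d + 1)) (Fin (d + 1)) ℝ))
    (hcontr : IsContractingElement C g)
    (x₀ : Vd d) (hx₀ : x₀ ∈ C)
    (nseq mseq : ℕ → ℕ) (hn : ∀ k, 0 < nseq k) (hm : ∀ k, 0 < mseq k)
    (p q : Vd d) (hp0 : p ≠ 0) (hq0 : q ≠ 0)
    (cp cq : ℕ → ℝ) (hcp : ∀ k, 0 < cp k) (hcq : ∀ k, 0 < cq k)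
    (hplim : Tendsto (fun k => cp k • (zpowMat g (nseq k)).mulVec x₀) atTop (nhds p))
    (hqlim : Tendsto (fun k => cq k • (zpowMat g (-(mseq k : ℤ))).mulVec x₀) atTop (nhds q))
    (hpE : p ∈ closure C ∧ p ∈ Eset (g : Matrix (Fin (d + 1)) (Fin (d + 1)) ℝ))
    (hqE : q ∈ closure C ∧ q ∈ Eset ((g⁻¹ : Matrix.GeneralLinearGroup (Fin (d + 1)) ℝ) :
      Matrix (Fin (d + 1)) (Fin (d + 1)) ℝ)) :
    openSegCone p q ⊆ C := by
    classical
  obtain ⟨y₀, hy₀C, -, ⟨K, Cq, hK, hCq, hqg⟩, S, hSsub, hy₀S, hSinv, hPSc, R, hcob⟩ := hcontr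
  obtain ⟨Cc, π, hπS, hπnear, hπcontr⟩ := hPSc
  have hpcl : p ∈ closure C := hpE.1
  have hqcl : q ∈ closure C := hqE.1
  -- if the limit is along a constant power, the limit point is interior
  have hconstcase : ∀ (e : ℕ → ℤ) (c : ℕ → ℝ) (ρ : Vd d), (∀ k, 0 < c k) → ρ ≠ 0 →
      Tendsto (fun k => c k • (zpowMat g (e k)).mulVec x₀) atTop (nhds ρ) →
      ∀ n₀ : ℤ, (∃ᶠ k in atTop, e k = n₀) → ρ ∈ C := by
    intro e c ρ hc hρ0 hlim n₀ hfreq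
    obtain ⟨φ, hφ, hφeq⟩ := Filter.extraction_of_frequently_atTop hfreq
    set aa := (zpowMat g n₀).mulVec x₀ with haadef
    have haaC : aa ∈ C := (zpow_mem_C_iff g hpres n₀).2 hx₀
    have haa0 : aa ≠ 0 := fun h => zero_not_mem hC (h ▸ haaC)
    have hlim' : Tendsto (fun k => c (φ k) • aa) atTop (nhds ρ) := by
      have h2 := hlim.comp hφ.tendsto_atTop
      apply h2.congr
      intro k
      simp only [Function.comp_apply, hφeq k, haadef]
    have hnorm : Tendsto (fun k => c (φ k) * ‖aa‖) atTop (nhds ‖ρ‖) := by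
      apply hlim'.norm.congr
      intro k
      rw [norm_smul, Real.norm_eq_abs, abs_of_pos (hc (φ k))]
    have hclim : Tendsto (fun k => c (φ k)) atTop (nhds (‖ρ‖ / ‖aa‖)) := by
      apply (hnorm.div_const ‖aa‖).congr
      intro k
      exact mul_div_cancel_right₀ _ (norm_ne_zero_iff.2 haa0)
    have hsmul : Tendsto (fun k => c (φ k) • aa) atTop (nhds ((‖ρ‖ / ‖aa‖) • aa)) :=
      hclim.smul_const aa
    have hρeq : ρ = (‖ρ‖ / ‖aa‖) • aa := tendsto_nhds_unique hlim' hsmul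
    have hcpos : 0 < ‖ρ‖ / ‖aa‖ :=
      div_pos (norm_pos_iff.2 hρ0) (norm_pos_iff.2 haa0)
    rw [hρeq]
    exact hC.2.2.2.1 _ haaC _ hcpos
  have hpigeon : ∀ (f : ℕ → ℕ) (b : ℕ), (∃ᶠ k in atTop, f k ≤ b) →
      ∃ n₀ : ℕ, ∃ᶠ k in atTop, f k = n₀ := by
    intro f b hfreq
    by_contra hno
    push_neg at hno
    have hev : ∀ᶠ k in atTop, ∀ n₀ ∈ Finset.range (b+1), f k ≠ n₀ := by
      rw [Filter.eventually_all_finset]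
      intro n₀ _
      exact hno n₀
    obtain ⟨k, hk1, hk2⟩ := (hfreq.and_eventually hev).exists
    exact hk2 (f k) (Finset.mem_range.2 (Nat.lt_succ_of_le hk1)) rfl
  by_cases hbn : ∃ b : ℕ, ∃ᶠ k in atTop, nseq k ≤ b
  · obtain ⟨b, hfreq⟩ := hbn
    obtain ⟨n₀, hfreq'⟩ := hpigeon nseq b hfreq
    have hfreqz : ∃ᶠ k in atTop, ((nseq k : ℤ)) = (n₀ : ℤ) :=
      hfreq'.mono fun k hk => by rw [hk]
    have hpC : p ∈ C :=
      hconstcase (fun k => (nseq k : ℤ)) cp p hcp hp0 hplim (n₀ : ℤ) hfreqz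
    exact openSeg_sub_C_of_mem hC hpC hqcl
  by_cases hbm : ∃ b : ℕ, ∃ᶠ k in atTop, mseq k ≤ b
  · obtain ⟨b, hfreq⟩ := hbm
    obtain ⟨m₀, hfreq'⟩ := hpigeon mseq b hfreq
    have hfreqz : ∃ᶠ k in atTop, (-(mseq k : ℤ)) = (-(m₀ : ℤ)) :=
      hfreq'.mono fun k hk => by rw [hk]
    have hqC : q ∈ C :=
      hconstcase (fun k => -(mseq k : ℤ)) cq q hcq hq0 hqlim (-(m₀ : ℤ)) hfreqz
    exact openSeg_sub_C_of_mem' hC hpcl hqC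
  -- both sequences tend to infinity
  push_neg at hbn hbm
  obtain ⟨B, hB0, T, hmain⟩ := main_construction hC hpres x₀ y₀ hx₀ hy₀C K Cq hK hCq hqg
    S hSsub hy₀S hSinv Cc π hπS hπnear hπcontr R hcob
  have hevn : ∀ᶠ k in atTop, T ≤ nseq k :=
    (hbn T).mono fun k hk => by omega
  have hevm : ∀ᶠ k in atTop, T ≤ mseq k :=
    (hbm T).mono fun k hk => by omega
  obtain ⟨K₀, hK₀⟩ := Filter.eventually_atTop.1 (hevn.and hevm)
  have hstk : ∀ k : ℕ, ∃ s t : ℝ, 0 ≤ s ∧ 0 ≤ t ∧ 0 < s + t ∧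
      coneDist C x₀ (s • (zpowMat g ((nseq (k + K₀) : ℤ))).mulVec x₀
        + t • (zpowMat g (-(mseq (k + K₀) : ℤ))).mulVec x₀) ≤ B := by
    intro k
    obtain ⟨hn', hm'⟩ := hK₀ (k + K₀) (Nat.le_add_left K₀ k)
    obtain ⟨v, hvseg, hvd⟩ := hmain (nseq (k + K₀)) (mseq (k + K₀)) hn' hm'
    obtain ⟨s, t, hs, ht, hst, rfl⟩ := hvseg
    exact ⟨s, t, hs, ht, hst, hvd⟩
  choose sfn tfn hsf htf hstf hdistf using hstk
  set Ak : ℕ → Vd d := fun k => cp (k + K₀) • (zpowMat g ((nseq (k + K₀) : ℤ))).mulVec x₀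
    with hAkdef
  set Bk : ℕ → Vd d := fun k => cq (k + K₀) • (zpowMat g (-(mseq (k + K₀) : ℤ))).mulVec x₀
    with hBkdef
  have hAlim : Tendsto Ak atTop (nhds p) := hplim.comp (tendsto_add_atTop_nat K₀)
  have hBlim : Tendsto Bk atTop (nhds q) := hqlim.comp (tendsto_add_atTop_nat K₀)
  set lam : ℕ → ℝ := fun k => sfn k / cp (k + K₀) with hlamdef
  set mu : ℕ → ℝ := fun k => tfn k / cq (k + K₀) with hmudef
  have hlam0 : ∀ k, 0 ≤ lam k := fun k => div_nonneg (hsf k) (hcp _).le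
  have hmu0 : ∀ k, 0 ≤ mu k := fun k => div_nonneg (htf k) (hcq _).le
  have hlm : ∀ k, 0 < lam k + mu k := by
    intro k
    rcases lt_or_ge 0 (sfn k) with h | h
    · exact add_pos_of_pos_of_nonneg (div_pos h (hcp _)) (hmu0 k)
    · have hs0 : sfn k = 0 := le_antisymm h (hsf k)
      have htpos : 0 < tfn k := by
        have := hstf k
        linarith [hsf k]
      exact add_pos_of_nonneg_of_pos (hlam0 k) (div_pos htpos (hcq _))
  set uu : ℕ → ℝ := fun k => lam k / (lam k + mu k) with huudef
  have huumem : ∀ k, uu k ∈ Icc (0:ℝ) 1 := by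
    intro k
    refine ⟨div_nonneg (hlam0 k) (hlm k).le, ?_⟩
    rw [div_le_one (hlm k)]
    linarith [hmu0 k]
  set vv : ℕ → Vd d := fun k => uu k • Ak k + (1 - uu k) • Bk k with hvvdef
  have hvveq : ∀ k, vv k = (lam k + mu k)⁻¹ •
      (sfn k • (zpowMat g ((nseq (k + K₀) : ℤ))).mulVec x₀
        + tfn k • (zpowMat g (-(mseq (k + K₀) : ℤ))).mulVec x₀) := by
    intro k
    have hcpne : cp (k + K₀) ≠ 0 := (hcp _).ne'
    have hcqne : cq (k + K₀) ≠ 0 := (hcq _).ne'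
    have hlmne : lam k + mu k ≠ 0 := (hlm k).ne'
    have hne2 : sfn k * cq (k + K₀) + tfn k * cp (k + K₀) ≠ 0 := by
      rcases lt_or_ge 0 (sfn k) with h | h
      · exact (add_pos_of_pos_of_nonneg (mul_pos h (hcq _))
          (mul_nonneg (htf k) (hcp _).le)).ne'
      · have hs0 : sfn k = 0 := le_antisymm h (hsf k)
        have htpos : 0 < tfn k := by
          have := hstf k
          linarith [hsf k]
        exact (add_pos_of_nonneg_of_pos (mul_nonneg (hsf k) (hcq _).le)
          (mul_pos htpos (hcp _))).ne'
    have e1 : uu k * cp (k + K₀) = (lam k + mu k)⁻¹ * sfn k := by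
      rw [huudef, hlamdef, hmudef]
      field_simp
    have e2 : (1 - uu k) * cq (k + K₀) = (lam k + mu k)⁻¹ * tfn k := by
      rw [huudef, hlamdef, hmudef]
      field_simp
      have hne3 : (sfn k * cq (k + K₀) + cp (k + K₀) * tfn k) ≠ 0 := by rwa [mul_comm (cp (k + K₀))]
      rw [← sub_eq_zero, show (1:ℝ) - sfn k * cq (k + K₀) / (sfn k * cq (k + K₀) + cp (k + K₀) * tfn k) - cp (k + K₀) * tfn k / (sfn k * cq (k + K₀) + cp (k + K₀) * tfn k) = 1 - (sfn k * cq (k + K₀) + cp (k + K₀) * tfn k) / (sfn k * cq (k + K₀) + cp (k + K₀) * tfn k) by ring, div_self hne3, sub_self]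
    rw [hvvdef, hAkdef, hBkdef]
    simp only
    rw [smul_add, smul_smul, smul_smul, smul_smul, smul_smul, e1, e2]
  have hvvC : ∀ k, vv k ∈ C := by
    intro k
    rw [hvveq k]
    apply hC.2.2.2.1
    · apply segCone_subset_C hC ((zpow_mem_C_iff g hpres _).2 hx₀)
        ((zpow_mem_C_iff g hpres _).2 hx₀)
      exact ⟨sfn k, tfn k, hsf k, htf k, hstf k, rfl⟩
    · exact inv_pos.2 (hlm k)
  have hvvd : ∀ k, coneDist C x₀ (vv k) ≤ B := by
    intro k
    rw [hvveq k, coneDist_smul_right hC (inv_pos.2 (hlm k))]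
    exact hdistf k
  obtain ⟨ul, hulmem, φ, hφ, hul⟩ :=
    IsCompact.tendsto_subseq (isCompact_Icc (a := (0:ℝ)) (b := 1)) (x := uu) huumem
  set z : Vd d := ul • p + (1 - ul) • q with hzdef
  have hzlim : Tendsto (fun k => vv (φ k)) atTop (nhds z) := by
    have h1 : Tendsto (fun k => uu (φ k) • Ak (φ k)) atTop (nhds (ul • p)) :=
      hul.smul (hAlim.comp hφ.tendsto_atTop)
    have h2 : Tendsto (fun k => (1 - uu (φ k)) • Bk (φ k)) atTop (nhds ((1 - ul) • q)) :=
      ((tendsto_const_nhds (x := (1:ℝ))).sub hul).smul (hBlim.comp hφ.tendsto_atTop)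
    exact h1.add h2
  have hz0 : z ≠ 0 := combo_ne_zero hC hpcl hqcl hp0 hq0 hulmem
  have hzC : z ∈ C :=
    limit_in_C hC hx₀ (fun k => hvvC (φ k)) hz0 hzlim (fun k => hvvd (φ k))
  exact openSeg_sub_C_of_combo hC hulmem hpcl hqcl hzC hzdef
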